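/- arXiv:1909.12188 — 8 statements merged into one kernel-verified Lean document; each statement's English description precedes it below -/
import Mathlib

section
/- Let F be a field with a valuation v and an ordering ≤ such that the valuation ring of v is convex with respect to ≤. If the completion-style density holds, namely F is dense in a real closure of (F,≤), then the value group vF is divisible. -/
/-- A linearly ordered field is real closed if every nonnegative element is a square
and every polynomial of odd degree has a root. -/
def IsRealClosedDef (R : Type*) [Field R] [LinearOrder R] [IsStrictOrderedRing R] : Prop :=
  (∀ x : R, 0 ≤ x → ∃ y : R, y ^ 2 = x) ∧
    ∀ p : Polynomial R, Odd p.natDegree → ∃ x : R, p.eval x = 0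

lemma exists_pos_pow_eq {R : Type*} [Field R] [LinearOrder R] [IsStrictOrderedRing R] (hrc : IsRealClosedDef R) :
    ∀ n : ℕ, 0 < n → ∀ x : R, 0 < x → ∃ r : R, 0 < r ∧ r ^ n = x := by
  intro n
  induction n using Nat.strong_induction_on with
  | _ n ih =>
    intro hn x hx
    rcases Nat.even_or_odd n with he | ho
    · obtain ⟨m, hm⟩ := he
      have hm0 : 0 < m := by omega
      obtain ⟨s, hs, hsm⟩ := ih m (by omega) hm0 x hx
      obtain ⟨y, hy⟩ := hrc.1 s hs.le
      have hy0 : y ≠ 0 := by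
        rintro rfl
        simp at hy
        exact absurd hy.symm hs.ne'
      refine ⟨|y|, abs_pos.mpr hy0, ?_⟩
      have habs : |y| ^ 2 = s := by rw [sq_abs]; exact hy
      calc |y| ^ n = (|y| ^ 2) ^ m := by rw [← pow_mul]; congr 1; omega
        _ = s ^ m := by rw [habs]
        _ = x := hsm
    · obtain ⟨t, ht⟩ := hrc.2 (Polynomial.X ^ n - Polynomial.C x)
        (by rwa [Polynomial.natDegree_X_pow_sub_C])
      simp only [Polynomial.eval_sub, Polynomial.eval_pow, Polynomial.eval_X,
        Polynomial.eval_C] at ht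
      have ht' : t ^ n = x := by linarith
      have htpos : 0 < t := by
        by_contra h
        push_neg at h
        have := Odd.pow_nonpos ho h
        rw [ht'] at this
        linarith
      exact ⟨t, htpos, ht'⟩

/-- if `v` is a non-trivial valuation on the ordered field `F` whose valuation
ring is convex for the ordering, and `F` is dense (for the order topology) in a real closure
of `(F, ≤)`, then the value group of `v` is divisible. -/
theorem value_group_divisible_of_dense_in_real_closure
    (F : Type) [Field F] [LinearOrder F] [IsStrictOrderedRing F]
    (Γ₀ : Type) [LinearOrderedCommGroupWithZero Γ₀]
    (v : Valuation F Γ₀)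
    (hconv : ∀ x y : F, 0 ≤ x → x ≤ y → v y ≤ 1 → v x ≤ 1)
    (hnontriv : ∃ x : F, x ≠ 0 ∧ v x ≠ 1)
    (R : Type) (_ : Field R) (_ : LinearOrder R) (_ : IsStrictOrderedRing R) (_ : Algebra F R)
    (hmono : Monotone (algebraMap F R))
    (halg : Algebra.IsAlgebraic F R)
    (hrc : IsRealClosedDef R)
    (hord : ∀ x : F, 0 ≤ x ↔ 0 ≤ algebraMap F R x)
    (hdense : ∀ x : R, ∀ ε : R, 0 < ε → ∃ y : F, |x - algebraMap F R y| < ε) :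
    ∀ x : F, x ≠ 0 → ∀ n : ℕ, 0 < n → ∃ y : F, y ≠ 0 ∧ (v y) ^ n = v x := by
  -- order transfer
  have hle : ∀ a b : F, a ≤ b ↔ algebraMap F R a ≤ algebraMap F R b := by
    intro a b
    rw [← sub_nonneg, ← sub_nonneg (b := algebraMap F R a), ← map_sub]
    exact hord (b - a)
  -- monotonicity of v on nonnegatives
  have hvmono : ∀ a b : F, 0 ≤ a → a ≤ b → v a ≤ v b := by
    intro a b ha hab
    rcases eq_or_lt_of_le ha with ha0 | ha0
    · simp [← ha0]
    have hb : 0 < b := lt_of_lt_of_le ha0 hab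
    have h1 : v (a / b) ≤ 1 := by
      refine hconv (a / b) 1 (by positivity) ?_ (by simp)
      rw [div_le_one hb]; exact hab
    have : v a = v (a / b) * v b := by
      rw [← v.map_mul, div_mul_cancel₀ _ hb.ne']
    rw [this]
    calc v (a / b) * v b ≤ 1 * v b := mul_le_mul_left h1 _
      _ = v b := one_mul _
  have h2le : v 2 ≤ 1 := by
    have := v.map_add 1 1
    simpa [one_add_one_eq_two] using this
  have h2 : v (2 : F) = 1 := by
    refine le_antisymm h2le ?_
    have hinv : v (2 : F)⁻¹ ≤ 1 := by
      have := hvmono (2 : F)⁻¹ 1 (by norm_num) (by norm_num)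
      simpa using this
    calc (1 : Γ₀) = v 2 * v (2 : F)⁻¹ := by
          rw [← v.map_mul, mul_inv_cancel₀ (two_ne_zero)]; simp
      _ ≤ v 2 * 1 := mul_le_mul_right hinv _
      _ = v 2 := mul_one _
  have h3le : v (3 : F) ≤ 1 := by
    have := v.map_add 2 1
    have h21 : (2 : F) + 1 = 3 := by norm_num
    rw [h21] at this
    exact le_trans this (by simp [h2le])
  intro x hx n hn
  set x' := |x| with hx'def
  have hx'pos : 0 < x' := abs_pos.mpr hx
  have hvx' : v x' = v x := by
    rcases abs_choice x with h | h
    · rw [hx'def, h]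
    · rw [hx'def, h, Valuation.map_neg]
  set xR := algebraMap F R x' with hxRdef
  have hxRpos : 0 < xR := by
    rcases lt_or_eq_of_le ((hord x').mp hx'pos.le) with h | h
    · exact h
    · exact absurd ((algebraMap F R).injective (by rw [map_zero]; exact h.symm)) hx'pos.ne'
  obtain ⟨r, hr, hrn⟩ := exists_pos_pow_eq hrc n hn xR hxRpos
  obtain ⟨y, hy⟩ := hdense r (r / 2) (by positivity)
  set yR := algebraMap F R y with hyRdef
  rw [abs_sub_lt_iff] at hy
  have hylo : r / 2 < yR := by linarith [hy.1]
  have hyhi : yR < 3 * r / 2 := by linarith [hy.2]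
  have hypos : 0 < y := by
    by_contra h
    push_neg at h
    have : yR ≤ 0 := by
      have := (hle y 0).mp h
      simpa using this
    linarith [lt_of_lt_of_le (by positivity : (0:R) < r / 2) hylo.le]
  -- bounds on y^n in R
  have hlowR : xR / 2 ^ n ≤ yR ^ n := by
    have h1 : (r / 2) ^ n ≤ yR ^ n := pow_le_pow_left₀ (by positivity) hylo.le n
    calc xR / 2 ^ n = (r / 2) ^ n := by rw [div_pow, hrn]
      _ ≤ yR ^ n := h1
  have hhiR : yR ^ n ≤ xR * 3 ^ n / 2 ^ n := by
    have h1 : yR ^ n ≤ (3 * r / 2) ^ n := by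
      apply pow_le_pow_left₀ _ hyhi.le
      linarith [lt_of_lt_of_le (by positivity : (0:R) < r / 2) hylo.le]
    calc yR ^ n ≤ (3 * r / 2) ^ n := h1
      _ = xR * 3 ^ n / 2 ^ n := by rw [div_pow, mul_pow, hrn]; ring
  -- transfer bounds to F
  have hlowF : x' / 2 ^ n ≤ y ^ n := by
    rw [hle]
    have : algebraMap F R (x' / 2 ^ n) = xR / 2 ^ n := by
      rw [map_div₀, map_pow, map_ofNat]
    rw [this, map_pow]
    exact hlowR
  have hhiF : y ^ n ≤ x' * 3 ^ n / 2 ^ n := by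
    rw [hle]
    have : algebraMap F R (x' * 3 ^ n / 2 ^ n) = xR * 3 ^ n / 2 ^ n := by
      rw [map_div₀, map_mul, map_pow, map_pow, map_ofNat, map_ofNat]
    rw [this, map_pow]
    exact hhiR
  -- valuation computations
  have hv2n : v ((2 : F) ^ n) = 1 := by rw [v.map_pow, h2, one_pow]
  have hvlow : v (x' / 2 ^ n) = v x' := by
    rw [v.map_div, hv2n, div_one]
  have hstep1 : v x' ≤ v (y ^ n) :=
    hvlow ▸ hvmono _ _ (by positivity) hlowF
  have hstep2 : v (y ^ n) ≤ v x' := by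
    have h1 : v (y ^ n) ≤ v (x' * 3 ^ n / 2 ^ n) :=
      hvmono _ _ (by positivity) hhiF
    have h2' : v (x' * 3 ^ n / 2 ^ n) = v x' * (v 3) ^ n := by
      rw [v.map_div, v.map_mul, v.map_pow, hv2n, div_one]
    rw [h2'] at h1
    calc v (y ^ n) ≤ v x' * (v 3) ^ n := h1
      _ ≤ v x' * 1 := mul_le_mul_right (pow_le_one' h3le n) _
      _ = v x' := mul_one _
  refine ⟨y, hypos.ne', ?_⟩
  rw [← v.map_pow, le_antisymm hstep2 hstep1, hvx']
end

section
/- Let v₁ and v₂ be valuations on a field F that are incomparable (neither valuation ring contains the other) and dependent (the smallest subring containing both valuation rings is not all of F, equivalently they have a common non-trivial coarsening). If F is dense in a henselization of (F,v₁) and dense in a henselization of (F,v₂), then the residue fields Fv₁ and Fv₂ are both algebraically closed. -/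
open Polynomial

section MkP
variable {S : Type*} [CommRing S]

/-- auxiliary polynomial `X^n + ∑_{i<n} g i * X^i`. -/
noncomputable def mkP (n : ℕ) (g : ℕ → S) : S[X] :=
  X ^ n + ∑ i ∈ Finset.range n, C (g i) * X ^ i

theorem mkP_coeff_lt {n : ℕ} {g : ℕ → S} {j : ℕ} (hj : j < n) :
    (mkP n g).coeff j = g j := by
  rw [mkP, coeff_add, coeff_X_pow, if_neg hj.ne, finset_sum_coeff]
  rw [Finset.sum_eq_single j]
  · simp
  · intro b _ hb
    simp [coeff_C_mul, coeff_X_pow, Ne.symm hb]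
  · intro h
    exact absurd (Finset.mem_range.2 hj) h

theorem mkP_coeff_self {n : ℕ} {g : ℕ → S} : (mkP n g).coeff n = 1 := by
  rw [mkP, coeff_add, coeff_X_pow, if_pos rfl, finset_sum_coeff]
  rw [Finset.sum_eq_zero]
  · ring
  · intro b hb
    have hbn := Finset.mem_range.1 hb
    rw [coeff_C_mul, coeff_X_pow, if_neg (by omega), mul_zero]

theorem mkP_coeff_gt {n : ℕ} {g : ℕ → S} {j : ℕ} (hj : n < j) :
    (mkP n g).coeff j = 0 := by
  rw [mkP, coeff_add, coeff_X_pow, if_neg hj.ne', finset_sum_coeff]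
  rw [Finset.sum_eq_zero]
  · ring
  · intro b hb
    have hbn := Finset.mem_range.1 hb
    rw [coeff_C_mul, coeff_X_pow, if_neg (by omega), mul_zero]

theorem mkP_monic [Nontrivial S] {n : ℕ} {g : ℕ → S} : (mkP n g).Monic := by
  apply monic_of_natDegree_le_of_coeff_eq_one n _ mkP_coeff_self
  apply natDegree_le_iff_coeff_eq_zero.2
  intro j hj
  exact mkP_coeff_gt hj

theorem mkP_map {T : Type*} [CommRing T] (φ : S →+* T) (n : ℕ) (g : ℕ → S) :
    (mkP n g).map φ = mkP n (fun i => φ (g i)) := by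
  simp [mkP, Polynomial.map_add, Polynomial.map_pow, Polynomial.map_sum]

theorem mkP_eval (n : ℕ) (g : ℕ → S) (x : S) :
    (mkP n g).eval x = x ^ n + ∑ i ∈ Finset.range n, g i * x ^ i := by
  simp [mkP, eval_finset_sum]

theorem mkP_deriv_eval_one (n : ℕ) (g : ℕ → S) :
    (derivative (mkP n g)).eval 1 = n + ∑ i ∈ Finset.range n, g i * i := by
  simp [mkP, derivative_sum, derivative_C_mul, derivative_X_pow, eval_finset_sum]

end MkP
section ValHelp
variable {K : Type*} [Field K] {Γ : Type*} [LinearOrderedCommGroupWithZero Γ] (v : Valuation K Γ)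

theorem mem_maxIdeal_iff (x : v.valuationSubring) :
    x ∈ IsLocalRing.maximalIdeal v.valuationSubring ↔ v ↑x < 1 := by
  rw [ValuationSubring.valuation_lt_one_iff]
  exact ((Valuation.isEquiv_valuation_valuationSubring v).lt_one_iff_lt_one).symm

theorem isUnit_val_iff (x : v.valuationSubring) : IsUnit x ↔ v ↑x = 1 := by
  rw [ValuationSubring.valuation_eq_one_iff]
  exact ((Valuation.isEquiv_valuation_valuationSubring v).eq_one_iff_eq_one).symm

theorem val_natCast_le_one (n : ℕ) : v (n : K) ≤ 1 := by
  induction n with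
  | zero => simp
  | succ k ih =>
    push_cast
    exact le_trans (v.map_add _ _) (max_le ih (le_of_eq v.map_one))

end ValHelp

theorem mul_lt_mul_of_lt_of_le₀ {α : Type*} [LinearOrderedCommGroupWithZero α] {a b c d : α}
    (hab : a ≤ b) (hb : b ≠ 0) (hcd : c < d) : a * c < b * d :=
  mul_lt_mul_of_le_of_lt_of_nonneg_of_pos hab hcd zero_le' (zero_lt_iff.2 hb)

/-- `F` is dense in a henselization of `(F, v)`: there is an algebraic valued field
extension of `(F, v)` which is henselian and in which `F` is dense for the valuation
topology.  (A henselization is such an extension, and conversely any such extension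
contains a henselization, so this is equivalent to density in a henselization.) -/
def DenseInHenselization (F : Type) [Field F] (Γ₀ : Type)
    [LinearOrderedCommGroupWithZero Γ₀] (v : Valuation F Γ₀) : Prop :=
  ∃ (H : Type) (_ : Field H) (_ : Algebra F H) (w : Valuation H Γ₀),
    (∀ y : F, w (algebraMap F H y) = v y) ∧
    Algebra.IsAlgebraic F H ∧
    HenselianLocalRing w.valuationSubring ∧
    ∀ x : H, ∀ c : F, c ≠ 0 → ∃ y : F, w (x - algebraMap F H y) < v c

section Hensel

variable {F : Type} [Field F] {Γ : Type} [LinearOrderedCommGroupWithZero Γ]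

theorem hensel_mod (v : Valuation F Γ) (hd : DenseInHenselization F Γ v) (n : ℕ) (g : ℕ → F)
    (hg : ∀ i, v (g i) ≤ 1) (a₀ : F) (ha₀ : v a₀ ≤ 1)
    (h1 : v ((mkP n g).eval a₀) < 1) (h2 : v ((derivative (mkP n g)).eval a₀) = 1)
    (c₀ : F) (hc0 : c₀ ≠ 0) (hc1 : v c₀ < 1) :
    ∃ y : F, v y ≤ 1 ∧ v (y - a₀) < 1 ∧ v ((mkP n g).eval y) < v c₀ := by
  obtain ⟨H, _, _, w, hw, -, hhens, hdense⟩ := hd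
  set ι := algebraMap F H with hι
  haveI : Nontrivial w.valuationSubring := ⟨⟨0, 1, fun h => zero_ne_one (congrArg Subtype.val h)⟩⟩
  have hgA : ∀ i, ι (g i) ∈ w.valuationSubring := fun i => by
    rw [Valuation.mem_valuationSubring_iff, hw]; exact hg i
  have ha₀A : ι a₀ ∈ w.valuationSubring := by rw [Valuation.mem_valuationSubring_iff, hw]; exact ha₀
  set gA : ℕ → w.valuationSubring := fun i => ⟨ι (g i), hgA i⟩ with hgA'
  set a₀A : w.valuationSubring := ⟨ι a₀, ha₀A⟩ with ha₀A'
  set GA := mkP n gA with hGA'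
  have hmapA : GA.map w.valuationSubring.subtype = (mkP n g).map ι := by
    rw [hGA', mkP_map, mkP_map]; rfl
  have hιeval : ∀ z : F, ((mkP n g).map ι).eval (ι z) = ι ((mkP n g).eval z) := by
    intro z; rw [eval_map, eval₂_at_apply]
  have key : ∀ x : w.valuationSubring, ((GA.eval x : w.valuationSubring) : H) = ((mkP n g).map ι).eval (x : H) := by
    intro x
    rw [← hmapA]
    show w.valuationSubring.subtype (GA.eval x) = (GA.map w.valuationSubring.subtype).eval (w.valuationSubring.subtype x)
    rw [eval_map, eval₂_at_apply]
  have hGAmonic : GA.Monic := mkP_monic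
  have hGAa₀ : GA.eval a₀A ∈ IsLocalRing.maximalIdeal w.valuationSubring := by
    rw [mem_maxIdeal_iff w]
    rw [key, show (a₀A : H) = ι a₀ from rfl, hιeval, hw]
    exact h1
  have hderkey : (((derivative GA).eval a₀A : w.valuationSubring) : H) = ι ((derivative (mkP n g)).eval a₀) := by
    have : (derivative GA).map w.valuationSubring.subtype = (derivative (mkP n g)).map ι := by
      rw [← derivative_map, hmapA, derivative_map]
    calc (((derivative GA).eval a₀A : w.valuationSubring) : H)
        = ((derivative GA).map w.valuationSubring.subtype).eval (w.valuationSubring.subtype a₀A) := by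
          rw [eval_map, eval₂_at_apply]; rfl
      _ = ((derivative (mkP n g)).map ι).eval (ι a₀) := by rw [this]; rfl
      _ = ι ((derivative (mkP n g)).eval a₀) := by rw [eval_map, eval₂_at_apply]
  have hGAder : IsUnit ((derivative GA).eval a₀A) := by
    rw [isUnit_val_iff w, hderkey, hw]
    exact h2
  obtain ⟨α, hroot, hα⟩ := hhens.is_henselian GA hGAmonic a₀A hGAa₀ hGAder
  obtain ⟨y, hy⟩ := hdense ↑α c₀ hc0
  have hαy : w ((α : H) - ι y) < v c₀ := hy
  have hyA : ι y ∈ w.valuationSubring := by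
    rw [Valuation.mem_valuationSubring_iff]
    have : ι y = (α : H) - ((α : H) - ι y) := by ring
    rw [this]
    refine le_trans (w.map_sub _ _) (max_le α.2 (le_of_lt (lt_of_lt_of_le hαy (le_of_lt hc1))))
  have hvy : v y ≤ 1 := by rw [← hw]; exact hyA
  refine ⟨y, hvy, ?_, ?_⟩
  · have h5 : w ((α : H) - ι a₀) < 1 := by
      have := (mem_maxIdeal_iff w (α - a₀A)).1 hα
      simpa using this
    have heq : ι y - ι a₀ = (ι y - (α : H)) + ((α : H) - ι a₀) := by ring
    rw [← hw (y - a₀), map_sub, heq]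
    refine lt_of_le_of_lt (w.map_add _ _) (max_lt ?_ h5)
    rw [Valuation.map_sub_swap]
    exact lt_of_lt_of_le hαy (le_of_lt hc1)
  · set β : w.valuationSubring := ⟨ι y, hyA⟩ with hβ
    obtain ⟨hcf, hhcf⟩ := sub_dvd_eval_sub β α GA
    have hev : GA.eval β = (β - α) * hcf := by
      rw [← hhcf, hroot.eq_zero, sub_zero]
    have hcoe : ι ((mkP n g).eval y) = ((GA.eval β : w.valuationSubring) : H) := by
      rw [key, hβ, ← hιeval]
    rw [← hw ((mkP n g).eval y), hcoe, hev]
    push_cast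
    rw [w.map_mul]
    calc w ((β : H) - (α : H)) * w (hcf : H)
        ≤ w ((β : H) - (α : H)) * 1 := mul_le_mul_right hcf.2 _
      _ = w ((β : H) - (α : H)) := mul_one _
      _ < v c₀ := by rw [hβ]; rw [Valuation.map_sub_swap]; exact hαy

end Hensel

section Dep

variable {F : Type} [Field F] {Γ₁ Γ₂ : Type} [LinearOrderedCommGroupWithZero Γ₁]
  [LinearOrderedCommGroupWithZero Γ₂]

/-- the join ring generated by the two valuation rings. -/
def depR (v₁ : Valuation F Γ₁) (v₂ : Valuation F Γ₂) : Subring F :=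
  Subring.closure ((v₁.valuationSubring : Set F) ∪ (v₂.valuationSubring : Set F))

variable (v₁ : Valuation F Γ₁) (v₂ : Valuation F Γ₂)

theorem mem_depR_left {x : F} (h : v₁ x ≤ 1) : x ∈ depR v₁ v₂ :=
  Subring.subset_closure (Or.inl h)

theorem mem_depR_right {x : F} (h : v₂ x ≤ 1) : x ∈ depR v₁ v₂ :=
  Subring.subset_closure (Or.inr h)

/-- the maximal ideal (as a predicate) of `depR`. -/
def depM (v₁ : Valuation F Γ₁) (v₂ : Valuation F Γ₂) (x : F) : Prop :=
  x ∈ depR v₁ v₂ ∧ (x ≠ 0 → x⁻¹ ∉ depR v₁ v₂)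

theorem depM_zero : depM v₁ v₂ 0 := ⟨Subring.zero_mem _, fun h => absurd rfl h⟩

theorem depM_mul {r μ : F} (hr : r ∈ depR v₁ v₂) (hμ : depM v₁ v₂ μ) :
    depM v₁ v₂ (r * μ) := by
  refine ⟨Subring.mul_mem _ hr hμ.1, fun h hinv => ?_⟩
  have hr0 : r ≠ 0 := fun h0 => h (by rw [h0, zero_mul])
  have hμ0 : μ ≠ 0 := fun h0 => h (by rw [h0, mul_zero])
  have : μ⁻¹ ∈ depR v₁ v₂ := by
    have := Subring.mul_mem _ hr hinv
    rwa [show r * (r * μ)⁻¹ = μ⁻¹ by field_simp] at this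
  exact hμ.2 hμ0 this

theorem depM_lt_one_left {μ : F} (hμ : depM v₁ v₂ μ) : v₁ μ < 1 := by
  by_cases h0 : μ = 0
  · rw [h0, Valuation.map_zero]; exact zero_lt_one
  by_contra hge
  push_neg at hge
  have : v₁ μ⁻¹ ≤ 1 := by
    rw [Valuation.map_inv]
    exact inv_le_one_of_one_le₀ hge
  exact hμ.2 h0 (mem_depR_left v₁ v₂ this)

theorem depM_lt_one_right {μ : F} (hμ : depM v₁ v₂ μ) : v₂ μ < 1 := by
  by_cases h0 : μ = 0
  · rw [h0, Valuation.map_zero]; exact zero_lt_one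
  by_contra hge
  push_neg at hge
  have : v₂ μ⁻¹ ≤ 1 := by
    rw [Valuation.map_inv]
    exact inv_le_one_of_one_le₀ hge
  exact hμ.2 h0 (mem_depR_right v₁ v₂ this)

theorem depM_small_left {c₀ x : F} (hc : depM v₁ v₂ c₀) (hc0 : c₀ ≠ 0)
    (hx : v₁ x < v₁ c₀) : depM v₁ v₂ x := by
  by_cases h0 : x = 0
  · rw [h0]; exact depM_zero v₁ v₂
  have h1 : v₁ (x * c₀⁻¹) < 1 := by
    rw [Valuation.map_mul, Valuation.map_inv]
    have hcne : v₁ c₀ ≠ 0 := (Valuation.ne_zero_iff v₁).2 hc0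
    calc v₁ x * (v₁ c₀)⁻¹ < v₁ c₀ * (v₁ c₀)⁻¹ := by
          rw [mul_comm (v₁ x), mul_comm (v₁ c₀)]
          exact mul_lt_mul_of_lt_of_le₀ le_rfl (inv_ne_zero hcne) hx
      _ = 1 := mul_inv_cancel₀ hcne
  have := depM_mul v₁ v₂ (mem_depR_left v₁ v₂ (le_of_lt h1)) hc
  rwa [show x * c₀⁻¹ * c₀ = x by field_simp] at this

theorem depM_small_right {c₀ x : F} (hc : depM v₁ v₂ c₀) (hc0 : c₀ ≠ 0)
    (hx : v₂ x < v₂ c₀) : depM v₁ v₂ x := by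
  by_cases h0 : x = 0
  · rw [h0]; exact depM_zero v₁ v₂
  have h1 : v₂ (x * c₀⁻¹) < 1 := by
    rw [Valuation.map_mul, Valuation.map_inv]
    have hcne : v₂ c₀ ≠ 0 := (Valuation.ne_zero_iff v₂).2 hc0
    calc v₂ x * (v₂ c₀)⁻¹ < v₂ c₀ * (v₂ c₀)⁻¹ := by
          rw [mul_comm (v₂ x), mul_comm (v₂ c₀)]
          exact mul_lt_mul_of_lt_of_le₀ le_rfl (inv_ne_zero hcne) hx
      _ = 1 := mul_inv_cancel₀ hcne
  have := depM_mul v₁ v₂ (mem_depR_right v₁ v₂ (le_of_lt h1)) hc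
  rwa [show x * c₀⁻¹ * c₀ = x by field_simp] at this

theorem exists_depM_ne (hdep : depR v₁ v₂ ≠ ⊤) :
    ∃ c₀ : F, depM v₁ v₂ c₀ ∧ c₀ ≠ 0 := by
  have : ∃ x : F, x ∉ depR v₁ v₂ := by
    by_contra h
    push_neg at h
    exact hdep ((Subring.eq_top_iff' _).2 h)
  obtain ⟨x, hx⟩ := this
  have hx0 : x ≠ 0 := fun h => hx (h ▸ Subring.zero_mem _)
  have hxinv : x⁻¹ ∈ depR v₁ v₂ := by
    by_cases h1 : v₁ x ≤ 1
    · exact absurd (mem_depR_left v₁ v₂ h1) hx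
    · push_neg at h1
      apply mem_depR_left v₁ v₂
      rw [Valuation.map_inv]
      exact inv_le_one_of_one_le₀ (le_of_lt h1)
  refine ⟨x⁻¹, ⟨hxinv, fun _ h => ?_⟩, inv_ne_zero hx0⟩
  rw [inv_inv] at h
  exact hx h

theorem exists_not_depM_right
    (hinc₁ : ¬ ((v₁.valuationSubring : Set F) ⊆ (v₂.valuationSubring : Set F))) :
    ∃ s₀ : F, s₀ ≠ 0 ∧ v₂ s₀ < 1 ∧ s₀⁻¹ ∈ depR v₁ v₂ := by
  by_contra h
  push_neg at h
  obtain ⟨z, hz1, hz2⟩ := Set.not_subset.1 hinc₁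
  have hz1' : v₁ z ≤ 1 := hz1
  have hz2' : 1 < v₂ z := not_le.1 hz2
  have hz0 : z ≠ 0 := by
    intro h0
    rw [h0, Valuation.map_zero] at hz2'
    exact absurd hz2' (by simp)
  have hzi : v₂ z⁻¹ < 1 := by
    rw [Valuation.map_inv]
    have hne : v₂ z ≠ 0 := (Valuation.ne_zero_iff v₂).2 hz0
    have := mul_lt_mul_of_lt_of_le₀ (le_refl (v₂ z)⁻¹) (inv_ne_zero hne) hz2'
    rwa [mul_one, inv_mul_cancel₀ hne] at this
  have := h z⁻¹ (inv_ne_zero hz0) hzi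
  rw [inv_inv] at this
  exact this (mem_depR_left v₁ v₂ hz1')

theorem depKey
    (hinc₁ : ¬ ((v₁.valuationSubring : Set F) ⊆ (v₂.valuationSubring : Set F)))
    (hinc₂ : ¬ ((v₂.valuationSubring : Set F) ⊆ (v₁.valuationSubring : Set F)))
    (c : F) (hcR : c ∈ depR v₁ v₂) (hc : c ≠ 0) (hcinv : c⁻¹ ∈ depR v₁ v₂) :
    ∃ s : F, s ≠ 0 ∧ s⁻¹ ∈ depR v₁ v₂ ∧ v₂ s < 1 ∧ v₁ c < v₁ s := by
  by_contra hbd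
  push_neg at hbd
  have hvc : v₁ c ≠ 0 := (Valuation.ne_zero_iff v₁).2 hc
  -- C2 : every element of small v₂-value has v₁-value at most v₁ c
  have C2 : ∀ s : F, v₂ s < 1 → v₁ s ≤ v₁ c := by
    intro s hs
    by_cases h0 : s = 0
    · rw [h0, Valuation.map_zero]; exact zero_le'
    by_cases hsi : s⁻¹ ∈ depR v₁ v₂
    · exact hbd s h0 hsi hs
    · have hsM : depM v₁ v₂ s := ⟨mem_depR_right v₁ v₂ (le_of_lt hs), fun _ => hsi⟩
      have := depM_lt_one_left v₁ v₂ (depM_mul v₁ v₂ hcinv hsM)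
      rw [Valuation.map_mul, Valuation.map_inv] at this
      have h2 := mul_lt_mul_of_lt_of_le₀ (le_refl (v₁ c)) hvc this
      rw [mul_one, ← mul_assoc, mul_inv_cancel₀ hvc, one_mul] at h2
      exact le_of_lt h2
  obtain ⟨s₀, hs₀0, hs₀2, hs₀inv⟩ := exists_not_depM_right v₁ v₂ hinc₁
  have hvs₀ : v₁ s₀ ≠ 0 := (Valuation.ne_zero_iff v₁).2 hs₀0
  set B : Γ₁ := v₁ c * (v₁ s₀)⁻¹ with hB
  have hBne : B ≠ 0 := mul_ne_zero hvc (inv_ne_zero hvs₀)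
  -- C3 : every element of the second valuation ring is v₁-bounded by B
  have C3 : ∀ b : F, v₂ b ≤ 1 → v₁ b ≤ B := by
    intro b hb
    have h1 : v₂ (b * s₀) < 1 := by
      rw [Valuation.map_mul]
      calc v₂ b * v₂ s₀ ≤ 1 * v₂ s₀ := mul_le_mul_left hb _
        _ = v₂ s₀ := one_mul _
        _ < 1 := hs₀2
    have h2 : v₁ b * v₁ s₀ ≤ v₁ c := by
      rw [← Valuation.map_mul]; exact C2 _ h1
    have h3 := mul_le_mul_left h2 (v₁ s₀)⁻¹
    rwa [mul_assoc, mul_inv_cancel₀ hvs₀, mul_one] at h3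
  -- the subring of sums of products
  set S : Set F := {x | ∃ a b : F, v₁ a ≤ 1 ∧ v₂ b ≤ 1 ∧ x = a * b} with hS
  have hmul : ∀ x ∈ AddSubmonoid.closure S, ∀ y ∈ AddSubmonoid.closure S,
      x * y ∈ AddSubmonoid.closure S := by
    intro x hx
    induction hx using AddSubmonoid.closure_induction with
    | mem x hxS =>
      intro y hy
      induction hy using AddSubmonoid.closure_induction with
      | mem y hyS =>
        obtain ⟨a, b, ha, hb, rfl⟩ := hxS
        obtain ⟨a', b', ha', hb', rfl⟩ := hyS
        apply AddSubmonoid.subset_closure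
        refine ⟨a * a', b * b', ?_, ?_, by ring⟩
        · rw [Valuation.map_mul]
          calc v₁ a * v₁ a' ≤ 1 * 1 := mul_le_mul' ha ha'
            _ = 1 := one_mul 1
        · rw [Valuation.map_mul]
          calc v₂ b * v₂ b' ≤ 1 * 1 := mul_le_mul' hb hb'
            _ = 1 := one_mul 1
      | zero => rw [mul_zero]; exact AddSubmonoid.zero_mem _
      | add y z _ _ hy hz => rw [mul_add]; exact AddSubmonoid.add_mem _ hy hz
    | zero => intro y hy; rw [zero_mul]; exact AddSubmonoid.zero_mem _
    | add x z _ _ hx hz => intro y hy; rw [add_mul]; exact AddSubmonoid.add_mem _ (hx y hy) (hz y hy)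
  have hneg : ∀ x ∈ AddSubmonoid.closure S, -x ∈ AddSubmonoid.closure S := by
    intro x hx
    induction hx using AddSubmonoid.closure_induction with
    | mem x hxS =>
      obtain ⟨a, b, ha, hb, rfl⟩ := hxS
      apply AddSubmonoid.subset_closure
      refine ⟨-a, b, ?_, hb, by ring⟩
      rw [Valuation.map_neg]; exact ha
    | zero => rw [neg_zero]; exact AddSubmonoid.zero_mem _
    | add x z _ _ hx hz => rw [neg_add]; exact AddSubmonoid.add_mem _ hx hz
  set T : Subring F :=
    { carrier := AddSubmonoid.closure S
      zero_mem' := AddSubmonoid.zero_mem _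
      add_mem' := fun hx hy => AddSubmonoid.add_mem _ hx hy
      one_mem' := AddSubmonoid.subset_closure ⟨1, 1, le_of_eq v₁.map_one, le_of_eq v₂.map_one,
        (one_mul 1).symm⟩
      mul_mem' := fun hx hy => hmul _ hx _ hy
      neg_mem' := fun hx => hneg _ hx } with hT
  have hRT : depR v₁ v₂ ≤ T := by
    rw [depR]
    apply Subring.closure_le.2
    rintro x (hx | hx)
    · exact AddSubmonoid.subset_closure ⟨x, 1, hx, le_of_eq v₂.map_one, (mul_one x).symm⟩
    · exact AddSubmonoid.subset_closure ⟨1, x, le_of_eq v₁.map_one, hx, (one_mul x).symm⟩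
  have C4 : ∀ x ∈ depR v₁ v₂, v₁ x ≤ B := by
    intro x hx
    have hx' : x ∈ AddSubmonoid.closure S := hRT hx
    clear hx
    induction hx' using AddSubmonoid.closure_induction with
    | mem x hxS =>
      obtain ⟨a, b, ha, hb, rfl⟩ := hxS
      rw [Valuation.map_mul]
      calc v₁ a * v₁ b ≤ 1 * B := mul_le_mul' ha (C3 b hb)
        _ = B := one_mul B
    | zero => rw [Valuation.map_zero]; exact zero_le'
    | add a b _ _ hpa hpb => exact le_trans (v₁.map_add a b) (max_le hpa hpb)
  -- contradiction using an element of the second ring not in the first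
  obtain ⟨z, hz2, hz1⟩ := Set.not_subset.1 hinc₂
  have hz2' : v₂ z ≤ 1 := hz2
  have hz1' : 1 < v₁ z := not_le.1 hz1
  have hxmem : c * s₀⁻¹ * z ∈ depR v₁ v₂ :=
    Subring.mul_mem _ (Subring.mul_mem _ hcR hs₀inv) (mem_depR_right v₁ v₂ hz2')
  have h5 := C4 _ hxmem
  rw [Valuation.map_mul, Valuation.map_mul, Valuation.map_inv] at h5
  have h6 : B < B * v₁ z := by
    have := mul_lt_mul_of_lt_of_le₀ (le_refl B) hBne hz1'
    rwa [mul_one] at this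
  rw [← hB] at h5
  exact absurd h5 (not_le.2 h6)

theorem depApprox
    (hinc₁ : ¬ ((v₁.valuationSubring : Set F) ⊆ (v₂.valuationSubring : Set F)))
    (hinc₂ : ¬ ((v₂.valuationSubring : Set F) ⊆ (v₁.valuationSubring : Set F)))
    (c : F) (hcR : c ∈ depR v₁ v₂) :
    ∃ e : F, v₁ (c * e) < 1 ∧ v₂ (c * (e - 1)) < 1 := by
  by_cases h1 : v₁ c < 1
  · refine ⟨1, by rwa [mul_one], ?_⟩
    rw [sub_self, mul_zero, Valuation.map_zero]
    exact zero_lt_one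
  by_cases h2 : v₂ c < 1
  · refine ⟨0, ?_, ?_⟩
    · rw [mul_zero, Valuation.map_zero]; exact zero_lt_one
    · rw [zero_sub, mul_neg, mul_one, Valuation.map_neg]; exact h2
  push_neg at h1 h2
  have hc0 : c ≠ 0 := by
    intro h
    rw [h, Valuation.map_zero] at h1
    exact absurd h1 (by simp)
  have hvc : v₁ c ≠ 0 := (Valuation.ne_zero_iff v₁).2 hc0
  have hv2c : v₂ c ≠ 0 := (Valuation.ne_zero_iff v₂).2 hc0
  have hcinv : c⁻¹ ∈ depR v₁ v₂ := by
    apply mem_depR_left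
    rw [Valuation.map_inv]
    exact inv_le_one_of_one_le₀ h1
  have hccinv : (c * c)⁻¹ ∈ depR v₁ v₂ := by
    rw [mul_inv]
    exact Subring.mul_mem _ hcinv hcinv
  obtain ⟨t, ht0, htinv, ht2, ht1⟩ := depKey v₁ v₂ hinc₁ hinc₂ (c * c)
    (Subring.mul_mem _ hcR hcR) (mul_ne_zero hc0 hc0) hccinv
  set s : F := t * c⁻¹ with hs
  have hs0 : s ≠ 0 := mul_ne_zero ht0 (inv_ne_zero hc0)
  have hv₁s : v₁ s = v₁ t * (v₁ c)⁻¹ := by rw [Valuation.map_mul, Valuation.map_inv]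
  have hsgtc : v₁ c < v₁ s := by
    have := mul_lt_mul_of_lt_of_le₀ (le_refl (v₁ c)⁻¹) (inv_ne_zero hvc) ht1
    rw [Valuation.map_mul] at this
    rw [← mul_assoc, inv_mul_cancel₀ hvc, one_mul] at this
    rw [hv₁s, mul_comm]
    exact this
  have hsgt1 : (1 : Γ₁) < v₁ s := lt_of_le_of_lt h1 hsgtc
  have hv₂s : v₂ s < 1 := by
    rw [Valuation.map_mul, Valuation.map_inv]
    calc v₂ t * (v₂ c)⁻¹ ≤ v₂ t * 1 := mul_le_mul_right (inv_le_one_of_one_le₀ h2) _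
      _ = v₂ t := mul_one _
      _ < 1 := ht2
  have hcs : c * s = t := by
    rw [hs, ← mul_assoc, mul_comm c t, mul_assoc, mul_inv_cancel₀ hc0, mul_one]
  have hs1 : v₁ (1 + s) = v₁ s := by
    rw [add_comm]
    exact v₁.map_add_eq_of_lt_left (by rw [v₁.map_one]; exact hsgt1)
  have h1s0 : (1 + s) ≠ 0 := by
    intro h
    rw [h, Valuation.map_zero] at hs1
    rw [← hs1] at hsgt1
    exact absurd hsgt1 (by simp)
  refine ⟨(1 + s)⁻¹, ?_, ?_⟩
  · rw [Valuation.map_mul, Valuation.map_inv, hs1]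
    have hvs : v₁ s ≠ 0 := (Valuation.ne_zero_iff v₁).2 hs0
    have := mul_lt_mul_of_lt_of_le₀ (le_refl (v₁ s)⁻¹) (inv_ne_zero hvs) hsgtc
    rw [mul_comm ((v₁ s)⁻¹) (v₁ s), mul_inv_cancel₀ hvs, mul_comm] at this
    exact this
  · have hid : c * ((1 + s)⁻¹ - 1) = (-t) * (1 + s)⁻¹ := by
      field_simp
      rw [← hcs]; ring
    rw [hid, Valuation.map_mul, Valuation.map_neg]
    have hv2_1s : v₂ (1 + s) = 1 := v₂.map_one_add_of_lt hv₂s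
    rw [Valuation.map_inv, hv2_1s, inv_one, mul_one]
    exact ht2

theorem depAux
    (hinc₁ : ¬ ((v₁.valuationSubring : Set F) ⊆ (v₂.valuationSubring : Set F)))
    (hinc₂ : ¬ ((v₂.valuationSubring : Set F) ⊆ (v₁.valuationSubring : Set F)))
    (hdep : Subring.closure ((v₁.valuationSubring : Set F) ∪ (v₂.valuationSubring : Set F)) ≠ ⊤)
    (hd₂ : DenseInHenselization F Γ₂ v₂) :
    IsAlgClosed (IsLocalRing.ResidueField v₁.valuationSubring) := by
  have hdep' : depR v₁ v₂ ≠ ⊤ := hdep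
  apply IsAlgClosed.of_exists_root
  intro p hpm hpi
  set n := p.natDegree with hn
  have hn1 : 1 ≤ n := by
    by_contra hlt
    push_neg at hlt
    interval_cases n
    · exact (hpi.not_isUnit) (hpm.natDegree_eq_zero.1 hn.symm ▸ isUnit_one)
  -- lift the coefficients of p
  have hchoice : ∀ i : ℕ, ∃ a : v₁.valuationSubring, IsLocalRing.residue _ a = p.coeff i :=
    fun i => IsLocalRing.residue_surjective (p.coeff i)
  choose f hf using hchoice
  have hfO₁ : ∀ i, v₁ ((f i : F)) ≤ 1 := fun i => (f i).2
  -- target coefficients mod v₂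
  set tt : ℕ → F := fun i => if i = n - 1 then -1 else 0 with htt
  have httv₂ : ∀ i, v₂ (tt i) ≤ 1 := by
    intro i
    rw [htt]
    by_cases h : i = n - 1 <;> simp [h]
  have httR : ∀ i, tt i ∈ depR v₁ v₂ := fun i => mem_depR_right v₁ v₂ (httv₂ i)
  -- approximate coefficients
  have happ : ∀ i : ℕ, ∃ gi : F, v₁ (gi - (f i : F)) < 1 ∧ v₂ (gi - tt i) < 1 := by
    intro i
    set c : F := tt i - (f i : F) with hc
    have hcR : c ∈ depR v₁ v₂ :=
      Subring.sub_mem _ (httR i) (mem_depR_left v₁ v₂ (hfO₁ i))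
    obtain ⟨e, he1, he2⟩ := depApprox v₁ v₂ hinc₁ hinc₂ c hcR
    refine ⟨(f i : F) + c * e, ?_, ?_⟩
    · rwa [add_sub_cancel_left]
    · have : (f i : F) + c * e - tt i = c * (e - 1) := by rw [hc]; ring
      rwa [this]
  choose g hg1 hg2 using happ
  have hgv₂ : ∀ i, v₂ (g i) ≤ 1 := by
    intro i
    have : g i = (g i - tt i) + tt i := by ring
    rw [this]
    exact le_trans (v₂.map_add _ _) (max_le (le_of_lt (hg2 i)) (httv₂ i))
  have hgv₁ : ∀ i, v₁ (g i) ≤ 1 := by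
    intro i
    have : g i = (g i - (f i : F)) + (f i : F) := by ring
    rw [this]
    exact le_trans (v₁.map_add _ _) (max_le (le_of_lt (hg1 i)) (hfO₁ i))
  -- element of the common maximal ideal
  obtain ⟨c₀, hc₀M, hc₀0⟩ := exists_depM_ne v₁ v₂ hdep'
  -- sum of target coefficients
  have hsumtt : ∑ i ∈ Finset.range n, tt i = -1 := by
    rw [htt, Finset.sum_eq_single (n - 1)]
    · simp
    · intro b _ hb; simp [hb]
    · intro h; exact absurd (Finset.mem_range.2 (by omega)) h
  have hsumtt' : ∑ i ∈ Finset.range n, tt i * (i : F) = -((n : F) - 1) := by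
    rw [htt, Finset.sum_eq_single (n - 1)]
    · have : ((n - 1 : ℕ) : F) = (n : F) - 1 := by
        push_cast [hn1]; ring
      simp [this]
    · intro b _ hb; simp [hb]
    · intro h; exact absurd (Finset.mem_range.2 (by omega)) h
  -- hensel conditions at 1
  have h1 : v₂ ((mkP n g).eval 1) < 1 := by
    have hev : (mkP n g).eval 1 = ∑ i ∈ Finset.range n, (g i - tt i) := by
      rw [mkP_eval, Finset.sum_sub_distrib, hsumtt]
      simp only [one_pow, mul_one, sub_neg_eq_add]
      ring
    rw [hev]
    exact Valuation.map_sum_lt _ one_ne_zero (fun i _ => hg2 i)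
  have h2 : v₂ ((derivative (mkP n g)).eval 1) = 1 := by
    have hkey : (derivative (mkP n g)).eval 1 = 1 + ∑ i ∈ Finset.range n, (g i - tt i) * (i : F) := by
      rw [mkP_deriv_eval_one]
      have : ∑ i ∈ Finset.range n, (g i - tt i) * (i : F)
          = (∑ i ∈ Finset.range n, g i * (i : F)) - ∑ i ∈ Finset.range n, tt i * (i : F) := by
        rw [← Finset.sum_sub_distrib]
        congr 1; funext i; ring
      rw [this, hsumtt']
      ring
    rw [hkey]
    apply v₂.map_one_add_of_lt
    apply Valuation.map_sum_lt _ one_ne_zero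
    intro i _
    rw [Valuation.map_mul]
    calc v₂ (g i - tt i) * v₂ (i : F) ≤ v₂ (g i - tt i) * 1 :=
          mul_le_mul_right (val_natCast_le_one v₂ i) _
      _ = v₂ (g i - tt i) := mul_one _
      _ < 1 := hg2 i
  obtain ⟨y, hy1, hy2, hy3⟩ := hensel_mod v₂ hd₂ n g hgv₂ 1 (le_of_eq v₂.map_one) h1 h2 c₀ hc₀0
    (depM_lt_one_right v₁ v₂ hc₀M)
  have hGyM : depM v₁ v₂ ((mkP n g).eval y) := depM_small_right v₁ v₂ hc₀M hc₀0 hy3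
  have hGyv₁ : v₁ ((mkP n g).eval y) < 1 := depM_lt_one_left v₁ v₂ hGyM
  -- y lies in the first valuation ring
  have hvy1 : v₁ y ≤ 1 := by
    by_contra hgt
    push_neg at hgt
    have hy0 : v₁ y ≠ 0 := by
      intro h; rw [h] at hgt; exact absurd hgt (by simp)
    have hpowlt : ∀ i, i < n → (v₁ y) ^ i < (v₁ y) ^ n := by
      intro i hi
      have h3 : (1 : Γ₁) < (v₁ y) ^ (n - i) := one_lt_pow' hgt (by omega)
      have h4 := mul_lt_mul_of_lt_of_le₀ (le_refl ((v₁ y) ^ i)) (pow_ne_zero i hy0) h3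
      rw [mul_one, ← pow_add] at h4
      rwa [show i + (n - i) = n by omega] at h4
    have heq : v₁ ((mkP n g).eval y) = (v₁ y) ^ n := by
      rw [mkP_eval]
      rw [Valuation.map_add_eq_of_lt_left]
      · exact v₁.map_pow y n
      · rw [v₁.map_pow]
        apply Valuation.map_sum_lt _ (pow_ne_zero n hy0)
        intro i hi
        rw [Valuation.map_mul, v₁.map_pow]
        calc v₁ (g i) * (v₁ y) ^ i ≤ 1 * (v₁ y) ^ i := mul_le_mul_left (hgv₁ i) _
          _ = (v₁ y) ^ i := one_mul _
          _ < (v₁ y) ^ n := hpowlt i (Finset.mem_range.1 hi)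
    rw [heq] at hGyv₁
    exact absurd hGyv₁ (not_lt.2 (le_of_lt (one_lt_pow' hgt (by omega))))
  -- evaluate the lifted polynomial
  have hfeval : v₁ ((mkP n (fun i => (f i : F))).eval y) < 1 := by
    have hdiff : (mkP n (fun i => (f i : F))).eval y
        = (mkP n g).eval y + ∑ i ∈ Finset.range n, ((f i : F) - g i) * y ^ i := by
      rw [mkP_eval, mkP_eval, add_assoc, ← Finset.sum_add_distrib]
      congr 1
      apply Finset.sum_congr rfl
      intro i _
      ring
    rw [hdiff]
    refine lt_of_le_of_lt (v₁.map_add _ _) (max_lt hGyv₁ ?_)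
    apply Valuation.map_sum_lt _ one_ne_zero
    intro i _
    rw [Valuation.map_mul, v₁.map_pow]
    calc v₁ ((f i : F) - g i) * (v₁ y) ^ i ≤ v₁ ((f i : F) - g i) * 1 :=
          mul_le_mul_right (pow_le_one' hvy1 i) _
      _ = v₁ ((f i : F) - g i) := mul_one _
      _ = v₁ (g i - (f i : F)) := Valuation.map_sub_swap v₁ _ _
      _ < 1 := hg1 i
  -- the lifted polynomial over the valuation subring
  set fO : Polynomial v₁.valuationSubring := mkP n f with hfO
  have hfmap : fO.map (IsLocalRing.residue v₁.valuationSubring) = p := by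
    apply Polynomial.ext
    intro j
    rw [coeff_map]
    rcases lt_trichotomy j n with hj | hj | hj
    · rw [mkP_coeff_lt hj, hf j]
    · subst hj
      rw [mkP_coeff_self, map_one, hn, (hpm.coeff_natDegree).symm]
    · rw [mkP_coeff_gt hj, map_zero,
        (Polynomial.coeff_eq_zero_of_natDegree_lt (by rw [← hn]; exact hj)).symm]
  set yO : v₁.valuationSubring := ⟨y, hvy1⟩ with hyO
  have hcoe : ((fO.eval yO : v₁.valuationSubring) : F) = (mkP n (fun i => (f i : F))).eval y := by
    calc ((fO.eval yO : v₁.valuationSubring) : F)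
        = (fO.map (v₁.valuationSubring).subtype).eval ((v₁.valuationSubring).subtype yO) := by
          rw [eval_map, eval₂_at_apply]; rfl
      _ = (mkP n (fun i => (f i : F))).eval y := by
          rw [hfO, mkP_map]; rfl
  have hmem : fO.eval yO ∈ IsLocalRing.maximalIdeal v₁.valuationSubring := by
    rw [mem_maxIdeal_iff v₁, hcoe]
    exact hfeval
  refine ⟨IsLocalRing.residue v₁.valuationSubring yO, ?_⟩
  have hre : p.eval (IsLocalRing.residue v₁.valuationSubring yO)
      = IsLocalRing.residue v₁.valuationSubring (fO.eval yO) := by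
    rw [← hfmap, eval_map, eval₂_at_apply]
  rw [hre]
  exact Ideal.Quotient.eq_zero_iff_mem.2 hmem

end Dep

/-- if `v₁, v₂` are incomparable dependent valuations on `F` and `F` is dense
in henselizations of both `(F, v₁)` and `(F, v₂)`, then both residue fields are
algebraically closed. -/
theorem residue_fields_algebraically_closed_of_dense_in_henselizations
    (F : Type) [Field F]
    (Γ₁ Γ₂ : Type) [LinearOrderedCommGroupWithZero Γ₁] [LinearOrderedCommGroupWithZero Γ₂]
    (v₁ : Valuation F Γ₁) (v₂ : Valuation F Γ₂)
    -- incomparable: neither valuation ring contains the other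
    (hinc₁ : ¬ (v₁.valuationSubring : Set F) ⊆ (v₂.valuationSubring : Set F))
    (hinc₂ : ¬ (v₂.valuationSubring : Set F) ⊆ (v₁.valuationSubring : Set F))
    -- dependent: the subring generated by the two valuation rings is not all of `F`
    (hdep : Subring.closure ((v₁.valuationSubring : Set F) ∪ (v₂.valuationSubring : Set F)) ≠ ⊤)
    (hd₁ : DenseInHenselization F Γ₁ v₁) (hd₂ : DenseInHenselization F Γ₂ v₂) :
    IsAlgClosed (IsLocalRing.ResidueField v₁.valuationSubring) ∧
      IsAlgClosed (IsLocalRing.ResidueField v₂.valuationSubring) := by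
  constructor
  · exact depAux v₁ v₂ hinc₁ hinc₂ hdep hd₂
  · refine depAux v₂ v₁ hinc₂ hinc₁ ?_ hd₁
    rwa [Set.union_comm]
end

section
/- Let F'/F be a field extension, v' a valuation on F' whose restriction to F is v, and w a coarsening of v (i.e., O_v ⊆ O_w). Then there exists a coarsening w' of v' whose restriction to F is w. -/
/-- In a valuation ring, every element of the span of a set containing `0` is divisible by
some element of the set. -/
lemma valring_exists_dvd_of_mem_span {R : Type*} [CommRing R] [IsDomain R] [ValuationRing R]
    {S : Set R} (h0 : (0 : R) ∈ S) {x : R} (hx : x ∈ Ideal.span S) : ∃ s ∈ S, s ∣ x := by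
  refine Submodule.span_induction (fun y hy => ⟨y, hy, dvd_refl y⟩) ⟨0, h0, dvd_zero 0⟩ ?_ ?_ hx
  · rintro x y _ _ ⟨s, hs, hsx⟩ ⟨t, ht, hty⟩
    rcases ValuationRing.dvd_total s t with h | h
    · exact ⟨s, hs, dvd_add hsx (h.trans hty)⟩
    · exact ⟨t, ht, dvd_add (h.trans hsx) hty⟩
  · rintro a x _ ⟨s, hs, hsx⟩
    exact ⟨s, hs, (smul_eq_mul a x) ▸ hsx.mul_left a⟩

/-- In a valuation ring, any proper radical ideal is prime. -/
lemma valring_radical_isPrime {R : Type*} [CommRing R] [IsDomain R] [ValuationRing R]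
    {I : Ideal R} (hI : I.radical ≠ ⊤) : I.radical.IsPrime := by
  constructor
  · exact hI
  · intro x y hxy
    rcases ValuationRing.dvd_total x y with h | h
    · right
      obtain ⟨c, rfl⟩ := h
      have h2 : (x * c) ^ 2 ∈ I.radical := by
        have : (x * c) ^ 2 = (x * (x * c)) * c := by ring
        rw [this]
        exact Ideal.mul_mem_right _ _ hxy
      exact Ideal.mem_radical_of_pow_mem h2
    · left
      obtain ⟨c, rfl⟩ := h
      have h2 : (y * c) ^ 2 ∈ I.radical := by
        have : (y * c) ^ 2 = ((y * c) * y) * c := by ring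
        rw [this]
        exact Ideal.mul_mem_right _ _ hxy
      exact Ideal.mem_radical_of_pow_mem h2

/-- if `v'` is a valuation on `F'` restricting to `v` on `F`, and `w` is a
coarsening of `v` (valuation rings: `O_v ⊆ O_w`), then there is a coarsening `w'` of `v'`
restricting to `w` on `F`.  Valuations are represented by their valuation subrings. -/
theorem exists_coarsening_prolongation
    (F F' : Type) [Field F] [Field F'] [Algebra F F']
    (Ov' : ValuationSubring F') (Ov Ow : ValuationSubring F)
    (hres : Ov'.comap (algebraMap F F') = Ov)
    (hcoarse : Ov ≤ Ow) :
    ∃ Ow' : ValuationSubring F', Ov' ≤ Ow' ∧ Ow'.comap (algebraMap F F') = Ow := by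
  classical
  have hmem : ∀ a : F, a ∈ Ov → algebraMap F F' a ∈ Ov' := fun a ha => by
    rw [← hres] at ha; exact ha
  have hinj : Function.Injective (algebraMap F F') := (algebraMap F F').injective
  -- the induced ring hom between the valuation rings
  let f : Ov →+* Ov' :=
    ((algebraMap F F').comp Ov.subtype).codRestrict Ov'.toSubring (fun a => hmem a a.2)
  have hf : ∀ a : Ov, (f a : F') = algebraMap F F' (a : F) := fun a => rfl
  set P : Ideal Ov := Ov.idealOfLE Ow hcoarse with hP
  have hPprime : P.IsPrime := ValuationSubring.prime_idealOfLE Ov Ow hcoarse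
  have hOw : Ov.ofPrime P = Ow := Ov.ofPrime_idealOfLE Ow hcoarse
  set P' : Ideal Ov' := (P.map f).radical with hP'
  -- key compatibility : `f a ∈ P' ↔ a ∈ P`
  have key : ∀ a : Ov, f a ∈ P' ↔ a ∈ P := by
    intro a
    constructor
    · intro ha
      obtain ⟨n, hn⟩ := ha
      have h0 : (0 : Ov') ∈ f '' (P : Set Ov) := ⟨0, P.zero_mem, map_zero f⟩
      obtain ⟨s, hs, c, hc⟩ := valring_exists_dvd_of_mem_span h0 hn
      obtain ⟨p, hp, rfl⟩ := hs
      by_cases hp0 : (p : F) = 0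
      · -- then `f a` is nilpotent, hence `a ^ n = 0 ∈ P`
        have hpz : p = (0 : Ov) := Subtype.ext hp0
        rw [hpz, map_zero, zero_mul] at hc
        have han : a ^ n = 0 := by
          have h1 : (algebraMap F F' (a : F)) ^ n = 0 := by
            rw [← hf a]
            exact_mod_cast congrArg Subtype.val hc
          have h2 : ((a : F)) ^ n = 0 := hinj (by rw [map_pow, h1, map_zero])
          exact Subtype.ext (by push_cast; exact h2)
        exact hPprime.mem_of_pow_mem n (han ▸ P.zero_mem)
      · -- the quotient `a^n / p` lies in `Ov` and witnesses `p ∣ a^n` in `Ov`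
        set q : F := (a : F)^n * (p : F)⁻¹ with hq
        have hcF' : algebraMap F F' ((a:F)^n) = algebraMap F F' (p : F) * (c : F') := by
          have := congrArg (Subtype.val) hc
          push_cast at this
          rw [map_pow, ← hf a, ← hf p, this]
        have hqmem : algebraMap F F' q ∈ Ov' := by
          have hpne : algebraMap F F' (p : F) ≠ 0 := fun h => hp0 (hinj (by rw [h, map_zero]))
          have : algebraMap F F' q = (c : F') := by
            rw [hq, map_mul, map_inv₀, hcF', ← div_eq_mul_inv, mul_div_cancel_left₀ _ hpne]
          rw [this]; exact c.2
        have hqOv : q ∈ Ov := by rw [← hres]; exact hqmem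
        have han : a ^ n ∈ P := by
          have hmul : (⟨q, hqOv⟩ : Ov) * p = a ^ n := by
            apply Subtype.ext
            push_cast
            rw [hq]
            field_simp
          exact hmul ▸ P.mul_mem_left _ hp
        exact hPprime.mem_of_pow_mem n han
    · intro ha
      exact Ideal.le_radical (Ideal.mem_map_of_mem f ha)
  have hP'prime : P'.IsPrime := by
    apply valring_radical_isPrime
    intro htop
    rw [← hP'] at htop
    have h1 : (1 : Ov') ∈ P' := htop ▸ Submodule.mem_top
    have : (1 : Ov) ∈ P := by rw [← key 1, map_one]; exact h1
    exact hPprime.ne_top (Ideal.eq_top_of_isUnit_mem _ this isUnit_one)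
  haveI := hP'prime
  refine ⟨Ov'.ofPrime P', Ov'.le_ofPrime P', ?_⟩
  ext x
  constructor
  · intro hx
    obtain ⟨a, s, hs, he⟩ := hx
    by_contra hxOw
    have hxOv : x ∉ Ov := fun h => hxOw (hcoarse h)
    have hx0 : x ≠ 0 := fun h => hxOw (h ▸ Ow.zero_mem)
    have hxi : x⁻¹ ∈ Ov := (Ov.mem_or_inv_mem x).resolve_left hxOv
    have hxiP : (⟨x⁻¹, hxi⟩ : Ov) ∈ P := by
      by_contra hnp
      refine hxOw ?_
      rw [← hOw]
      exact ⟨1, ⟨x⁻¹, hxi⟩, hnp, by simp only [map_one, one_mul]; exact (inv_inv x).symm⟩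
    -- then `s ∈ P'`, contradiction
    have hfx : f ⟨x⁻¹, hxi⟩ ∈ P' := (key _).mpr hxiP
    have hs0 : (s : F') ≠ 0 := fun h => hs (by
      have : s = 0 := Subtype.ext h
      rw [this]; exact P'.zero_mem)
    have hseq : s = f ⟨x⁻¹, hxi⟩ * a := by
      apply Subtype.ext
      push_cast
      rw [hf]
      have hx'0 : algebraMap F F' x ≠ 0 := fun h => hx0 (hinj (by rw [h, map_zero]))
      have : algebraMap F F' x * (s : F') = (a : F') := by
        rw [he]; field_simp
        exact mul_div_cancel_right₀ _ hs0
      rw [map_inv₀, ← this]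
      field_simp
    rw [hseq] at hs
    exact hs (Ideal.mul_mem_right _ _ hfx)
  · intro hx
    rw [← hOw] at hx
    obtain ⟨a, s, hs, he⟩ := hx
    refine ⟨f a, f s, fun hc => hs ((key s).mp hc), ?_⟩
    rw [he, map_mul, map_inv₀]
    rfl
end

section
/- Let F'/F be a field extension, ≤' an ordering on F' extending an ordering ≤ on F, and w a ≤-convex valuation on F. Then there exists a ≤'-convex valuation w' on F' whose restriction to F is w. -/
/-- if `≤'` is an ordering of `F'` extending the ordering `≤` of `F`
(both realized here as linear ordered field structures with a monotone embedding),
and `w` is a `≤`-convex valuation on `F` (given by its valuation subring), then there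
is a `≤'`-convex valuation `w'` on `F'` restricting to `w` on `F`. -/
theorem exists_convex_prolongation_of_convex_valuation
    (F F' : Type) [Field F] [LinearOrder F] [IsStrictOrderedRing F]
    [Field F'] [LinearOrder F'] [IsStrictOrderedRing F'] [Algebra F F']
    (hmono : Monotone (algebraMap F F'))
    (hord : ∀ x : F, 0 ≤ x ↔ 0 ≤ algebraMap F F' x)
    (Ow : ValuationSubring F)
    (hconv : ∀ x y : F, 0 ≤ x → x ≤ y → y ∈ Ow → x ∈ Ow) :
    ∃ Ow' : ValuationSubring F',
      (∀ x y : F', 0 ≤ x → x ≤ y → y ∈ Ow' → x ∈ Ow') ∧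
      Ow'.comap (algebraMap F F') = Ow := by
  set f := algebraMap F F' with hf
  have hle : ∀ a b : F, a ≤ b ↔ f a ≤ f b := by
    intro a b
    rw [← sub_nonneg, ← sub_nonneg (b := f a), ← map_sub, hord]
  refine ⟨{ carrier := {x : F' | ∃ a ∈ Ow, |x| ≤ f a}
            one_mem' := ⟨1, one_mem _, by simp⟩
            zero_mem' := ⟨1, one_mem _, by simp⟩
            mul_mem' := ?_
            add_mem' := ?_
            neg_mem' := ?_
            mem_or_inv_mem' := ?_ }, ?_, ?_⟩
  · rintro x y ⟨a, ha, hxa⟩ ⟨b, hb, hyb⟩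
    exact ⟨a * b, mul_mem ha hb, by
      rw [abs_mul, map_mul]
      exact mul_le_mul hxa hyb (abs_nonneg _) ((abs_nonneg _).trans hxa)⟩
  · rintro x y ⟨a, ha, hxa⟩ ⟨b, hb, hyb⟩
    exact ⟨a + b, add_mem ha hb, by
      rw [map_add]
      exact (abs_add_le _ _).trans (add_le_add hxa hyb)⟩
  · rintro x ⟨a, ha, hxa⟩
    exact ⟨a, ha, by rwa [abs_neg]⟩
  · intro x
    by_cases hx : ∃ a ∈ Ow, |x| ≤ f a
    · exact Or.inl hx
    · right
      push_neg at hx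
      have h1 : (1 : F') < |x| := by
        have := hx 1 (one_mem _)
        rw [map_one] at this
        linarith
      refine ⟨1, one_mem _, ?_⟩
      rw [map_one, abs_inv]
      exact inv_le_one_of_one_le₀ h1.le
  · rintro x y hx hxy ⟨a, ha, hya⟩
    refine ⟨a, ha, ?_⟩
    rw [abs_of_nonneg hx]
    exact hxy.trans ((le_abs_self y).trans hya)
  · ext r
    simp only [ValuationSubring.mem_comap]
    constructor
    · rintro ⟨a, ha, h⟩
      have h1 : r ≤ a := by
        rw [hle]
        exact (le_abs_self _).trans h
      have h2 : -r ≤ a := by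
        rw [hle, map_neg]
        exact (neg_le_abs _).trans h
      have habs : |r| ∈ Ow := hconv _ _ (abs_nonneg r) (abs_le.mpr ⟨by linarith, h1⟩) ha
      rcases abs_cases r with ⟨h, _⟩ | ⟨h, _⟩
      · rwa [← h]
      · have := neg_mem habs
        rwa [h, neg_neg] at this
    · intro hr
      refine ⟨|r|, ?_, ?_⟩
      · rcases abs_cases r with ⟨h, _⟩ | ⟨h, _⟩
        · rwa [h]
        · rw [h]; exact neg_mem hr
      · rw [abs_le]
        constructor
        · rw [← map_neg, ← hle]
          exact neg_abs_le r
        · rw [← hle]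
          exact le_abs_self r
end

section
/- Let F be a field of characteristic 0 that is dense in a real closure for each of two distinct orderings ≤₁ and ≤₂. Then ≤₁ and ≤₂ induce distinct (independent) topologies on F. -/
/-- A linearly ordered field is real closed. -/
def IsRealClosedLOF (R : Type*) [Field R] [LinearOrder R] [IsStrictOrderedRing R] : Prop :=
  (∀ x : R, 0 ≤ x → ∃ y : R, y ^ 2 = x) ∧
    ∀ p : Polynomial R, Odd p.natDegree → ∃ x : R, p.eval x = 0

/-- `P` is the positive cone of a field ordering on `K`. -/
structure IsOrderingCone (K : Type*) [Field K] (P : Set K) : Prop where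
  add_mem : ∀ x ∈ P, ∀ y ∈ P, x + y ∈ P
  mul_mem : ∀ x ∈ P, ∀ y ∈ P, x * y ∈ P
  sq_mem : ∀ x : K, x ^ 2 ∈ P
  neg_one_not_mem : (-1 : K) ∉ P
  total : ∀ x : K, x ∈ P ∨ -x ∈ P

/-- The order topology of the ordering with positive cone `P`: generated by the
open intervals `(a, b)`. -/
def coneTopology (K : Type*) [Field K] (P : Set K) : TopologicalSpace K :=
  TopologicalSpace.generateFrom
    {S | ∃ a b : K, S = {x : K | x - a ∈ P ∧ x ≠ a ∧ b - x ∈ P ∧ x ≠ b}}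

/-- `F` is dense in a real closure of the ordering with positive cone `P`. -/
def DenseInRealClosureOfCone (F : Type) [Field F] (P : Set F) : Prop :=
  ∃ (R : Type) (_ : Field R) (_ : LinearOrder R) (_ : IsStrictOrderedRing R) (_ : Algebra F R),
    (∀ x : F, x ∈ P ↔ 0 ≤ algebraMap F R x) ∧
    Algebra.IsAlgebraic F R ∧ IsRealClosedLOF R ∧
    ∀ x : R, ∀ ε : R, 0 < ε → ∃ y : F, |x - algebraMap F R y| < ε

private lemma cone_eq_zero {K : Type*} [Field K] {P : Set K} (h : IsOrderingCone K P)
    {w : K} (hw : w ∈ P) (hnw : -w ∈ P) : w = 0 := by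
  by_contra h0
  apply h.neg_one_not_mem
  have h2 : (w * -w) * (w⁻¹) ^ 2 ∈ P :=
    h.mul_mem _ (h.mul_mem _ hw _ hnw) _ (h.sq_mem w⁻¹)
  have he : (w * -w) * (w⁻¹) ^ 2 = -1 := by field_simp
  rwa [he] at h2

private lemma aux_ne {F : Type} [Field F]
    (P₁ P₂ : Set F) (h₁ : IsOrderingCone F P₁) (h₂ : IsOrderingCone F P₂)
    (a : F) (ha1 : a ∈ P₁) (ha2 : a ∉ P₂)
    (hd₁ : DenseInRealClosureOfCone F P₁) :
    coneTopology F P₁ ≠ coneTopology F P₂ := by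
  obtain ⟨R, instR, instLO, instSOR, instA, hP, _halg, hrc, hdense⟩ := hd₁
  set f : F →+* R := algebraMap F R with hf
  have hinj : Function.Injective f := f.injective
  have ha0 : a ≠ 0 := by rintro rfl; exact ha2 (by simpa using h₂.sq_mem 0)
  have hna2 : -a ∈ P₂ := (h₂.total a).resolve_left ha2
  have hfa0 : f a ≠ 0 := by simpa using hinj.ne ha0
  have hfa : 0 < f a := lt_of_le_of_ne ((hP a).mp ha1) (Ne.symm hfa0)
  -- square root of f a
  obtain ⟨s₀, hs₀⟩ := hrc.1 (f a) hfa.le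
  have hs : |s₀| ^ 2 = f a := by rw [sq_abs]; exact hs₀
  set s : R := |s₀| with hsdef
  have hspos : 0 < s := by
    have : s₀ ≠ 0 := by rintro rfl; simp at hs₀; exact hfa0 hs₀.symm
    exact abs_pos.mpr this
  -- interval characterization
  have hiff : ∀ A B x : F,
      (x - A ∈ P₁ ∧ x ≠ A ∧ B - x ∈ P₁ ∧ x ≠ B) ↔ (f A < f x ∧ f x < f B) := by
    intro A B x
    rw [hP, hP, map_sub, map_sub, sub_nonneg, sub_nonneg]
    constructor
    · rintro ⟨q1, q2, q3, q4⟩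
      exact ⟨lt_of_le_of_ne q1 (fun h => q2 (hinj h.symm)),
             lt_of_le_of_ne q3 (fun h => q4 (hinj h))⟩
    · rintro ⟨hl, hr⟩
      exact ⟨hl.le, fun h => hl.ne' (congrArg f h), hr.le, fun h => hr.ne (congrArg f h)⟩
  have key : ∀ U : Set F,
      TopologicalSpace.GenerateOpen
        {S | ∃ A B : F, S = {x : F | x - A ∈ P₁ ∧ x ≠ A ∧ B - x ∈ P₁ ∧ x ≠ B}} U →
      ∀ x ∈ U, ∃ u v : F, f u < f x ∧ f x < f v ∧
        {w : F | f u < f w ∧ f w < f v} ⊆ U := by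
    intro U hU
    induction hU with
    | basic S hS =>
        obtain ⟨A, B, rfl⟩ := hS
        intro x hx
        rw [Set.mem_setOf_eq, hiff] at hx
        exact ⟨A, B, hx.1, hx.2, fun w hw => (hiff A B w).mpr hw⟩
    | univ =>
        intro x _
        refine ⟨x - 1, x + 1, ?_, ?_, Set.subset_univ _⟩ <;>
          simp [map_sub, map_add, map_one] <;> norm_num
    | inter U V hU hV ihU ihV =>
        intro x hx
        obtain ⟨u₁, v₁, hu₁, hv₁, hs₁⟩ := ihU x hx.1
        obtain ⟨u₂, v₂, hu₂, hv₂, hs₂⟩ := ihV x hx.2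
        rcases le_total (f u₁) (f u₂) with hu | hu <;>
          rcases le_total (f v₁) (f v₂) with hv | hv
        · exact ⟨u₂, v₁, hu₂, hv₁, fun w hw =>
            ⟨hs₁ ⟨lt_of_le_of_lt hu hw.1, hw.2⟩, hs₂ ⟨hw.1, lt_of_lt_of_le hw.2 hv⟩⟩⟩
        · exact ⟨u₂, v₂, hu₂, hv₂, fun w hw =>
            ⟨hs₁ ⟨lt_of_le_of_lt hu hw.1, lt_of_lt_of_le hw.2 hv⟩, hs₂ ⟨hw.1, hw.2⟩⟩⟩
        · exact ⟨u₁, v₁, hu₁, hv₁, fun w hw =>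
            ⟨hs₁ ⟨hw.1, hw.2⟩, hs₂ ⟨lt_of_le_of_lt hu hw.1, lt_of_lt_of_le hw.2 hv⟩⟩⟩
        · exact ⟨u₁, v₂, hu₁, hv₂, fun w hw =>
            ⟨hs₁ ⟨hw.1, lt_of_lt_of_le hw.2 hv⟩, hs₂ ⟨lt_of_le_of_lt hu hw.1, hw.2⟩⟩⟩
    | sUnion s hs ih =>
        intro x hx
        obtain ⟨t, ht, hxt⟩ := hx
        obtain ⟨u, v, q1, q2, q3⟩ := ih t ht x hxt
        exact ⟨u, v, q1, q2, q3.trans (Set.subset_sUnion_of_mem ht)⟩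
  intro hEq
  set V : Set F := {x : F | x - a ∈ P₂ ∧ x ≠ a ∧ -a - x ∈ P₂ ∧ x ≠ -a} with hVdef
  have hVopen₂ : (coneTopology F P₂).IsOpen V :=
    TopologicalSpace.GenerateOpen.basic _ ⟨a, -a, rfl⟩
  have hVopen₁ : (coneTopology F P₁).IsOpen V := by rw [hEq]; exact hVopen₂
  have h0V : (0 : F) ∈ V := by
    refine ⟨by simpa using hna2, Ne.symm ha0, by simpa using hna2,
      fun h => ha0 (neg_eq_zero.mp h.symm)⟩
  obtain ⟨u, v, hu, hv, hsub⟩ := key V hVopen₁ 0 h0V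
  rw [map_zero] at hu hv
  set ε : R := min (f v) (-f u) with hεdef
  have hε : 0 < ε := lt_min hv (by linarith)
  set δ : R := min (ε / (2 * s + 1)) (min 1 (s / 2)) with hδdef
  have hδ : 0 < δ :=
    lt_min (div_pos hε (by linarith)) (lt_min one_pos (by linarith))
  have hδε : δ * (2 * s + 1) ≤ ε :=
    (le_div_iff₀ (by linarith : (0:R) < 2 * s + 1)).mp (min_le_left _ _)
  have hδ1 : δ ≤ 1 := le_trans (min_le_right _ _) (min_le_left _ _)
  have hδs : δ ≤ s / 2 := le_trans (min_le_right _ _) (min_le_right _ _)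
  obtain ⟨y, hy⟩ := hdense s δ hδ
  rw [abs_sub_lt_iff] at hy
  have hy0 : 0 < f y := by linarith [hy.1]
  have hfz : f (y ^ 2 - a) = f y ^ 2 - s ^ 2 := by rw [map_sub, map_pow, ← hs]
  have hzb : |f (y ^ 2 - a)| < ε := by
    rw [hfz, abs_lt]
    constructor
    · nlinarith [mul_pos (show (0:R) < δ - (s - f y) by linarith)
        (show (0:R) < s + f y by linarith)]
    · nlinarith [mul_pos (show (0:R) < δ - (f y - s) by linarith)
        (show (0:R) < f y + s by linarith)]
  rw [abs_lt] at hzb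
  have hzV : (y ^ 2 - a) ∈ V := by
    apply hsub
    constructor
    · have : ε ≤ -f u := min_le_right _ _
      linarith [hzb.1]
    · have : ε ≤ f v := min_le_left _ _
      linarith [hzb.2]
  obtain ⟨-, -, hq3, hq4⟩ := hzV
  have hy2 : -(-a - (y ^ 2 - a)) ∈ P₂ := by
    have : -(-a - (y ^ 2 - a)) = y ^ 2 := by ring
    rw [this]; exact h₂.sq_mem y
  have := cone_eq_zero h₂ hq3 hy2
  exact hq4 (by linear_combination -this)

/-- if a field `F` of characteristic 0 is dense in a real closure for each of
two distinct orderings `P₁`, `P₂`, then the two orderings induce distinct topologies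
on `F` (i.e. they are independent). -/
theorem distinct_topologies_of_dense_in_real_closures
    (F : Type) [Field F] [CharZero F]
    (P₁ P₂ : Set F) (h₁ : IsOrderingCone F P₁) (h₂ : IsOrderingCone F P₂)
    (hne : P₁ ≠ P₂)
    (hd₁ : DenseInRealClosureOfCone F P₁) (hd₂ : DenseInRealClosureOfCone F P₂) :
    coneTopology F P₁ ≠ coneTopology F P₂ := by
  by_cases hsub : P₁ ⊆ P₂
  · have hns : ¬ P₂ ⊆ P₁ := fun h => hne (hsub.antisymm h)
    obtain ⟨a, ha2, ha1⟩ := Set.not_subset.mp hns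
    exact (aux_ne P₂ P₁ h₂ h₁ a ha2 ha1 hd₂).symm
  · obtain ⟨a, ha1, ha2⟩ := Set.not_subset.mp hsub
    exact aux_ne P₁ P₂ h₁ h₂ a ha1 ha2 hd₁
end

section
/- Let F = K(x₁, …, x_m) be a rational function field in m = 4^i variables over a formally real field K, and let d ∈ K be a sum of squares in K. Then the element e = d + x₁² + ⋯ + x_m² cannot be written as a sum of fewer than 4^i squares in F. -/
open Polynomial Finset

section FRField
variable {F : Type} [Field F]

/-- extend a sum of squares over a subtype/erase to Fin n by zeros -/
lemma fr_sum_sq_eq_zero (hF : ∀ (k : ℕ) (f : Fin k → F), ∑ j, f j ^ 2 ≠ -1) :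
    ∀ (k : ℕ) (f : Fin k → F), ∑ j, f j ^ 2 = 0 → ∀ j, f j = 0 := by
  intro k f hsum j
  by_contra hj
  apply hF k (fun i => if i = j then 0 else f i / f j)
  have hfj : f j ^ 2 ≠ 0 := pow_ne_zero _ hj
  have h1 : ∑ i ∈ Finset.univ.erase j, f i ^ 2 = -(f j ^ 2) := by
    have := Finset.sum_erase_add Finset.univ (fun i => f i ^ 2) (Finset.mem_univ j)
    exact eq_neg_of_add_eq_zero_left (this.trans hsum)
  calc ∑ i, (if i = j then 0 else f i / f j) ^ 2
      = ∑ i ∈ Finset.univ.erase j, (if i = j then 0 else f i / f j) ^ 2 := by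
        rw [← Finset.sum_erase_add Finset.univ _ (Finset.mem_univ j)]
        simp
    _ = (∑ i ∈ Finset.univ.erase j, f i ^ 2) / f j ^ 2 := by
        rw [Finset.sum_div]
        refine Finset.sum_congr rfl fun i hi => ?_
        rw [if_neg (Finset.mem_erase.mp hi).1, div_pow]
    _ = -1 := by rw [h1, neg_div, div_self hfj]

lemma fr_two_ne_zero (hF0 : ∀ (k : ℕ) (f : Fin k → F), ∑ j, f j ^ 2 = 0 → ∀ j, f j = 0) :
    (2 : F) ≠ 0 := by
  intro h2
  have := hF0 2 (fun _ => 1) (by simpa [Fin.sum_univ_two, one_add_one_eq_two] using h2) 0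
  simp at this

lemma fr_neg_one (hF0 : ∀ (k : ℕ) (f : Fin k → F), ∑ j, f j ^ 2 = 0 → ∀ j, f j = 0) :
    ∀ (k : ℕ) (f : Fin k → F), ∑ j, f j ^ 2 ≠ -1 := by
  intro k f hsum
  have := hF0 (k + 1) (Fin.snoc f 1) ?_ (Fin.last k)
  · simp at this
  · rw [Fin.sum_univ_castSucc]
    simp [Fin.snoc, hsum]

lemma fr_charZero (hF0 : ∀ (k : ℕ) (f : Fin k → F), ∑ j, f j ^ 2 = 0 → ∀ j, f j = 0) :
    CharZero F := by
  have hF := fr_neg_one hF0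
  refine ⟨fun a b hab => ?_⟩
  by_contra hne
  wlog hlt : b < a generalizing a b
  · exact this b a hab.symm (Ne.symm hne) (by omega)
  -- (a : F) = (b : F), a > b, so (a - b : ℕ) casts to 0 with a - b > 0
  set p := a - b with hp
  have hp0 : 0 < p := by omega
  have hcast : (p : F) = 0 := by
    have : ((a - b : ℕ) : F) = (a : F) - (b : F) := Nat.cast_sub (by omega)
    rw [hp, this, hab, sub_self]
  apply hF (p - 1) (fun _ => 1)
  rw [Finset.sum_const, Finset.card_univ, Fintype.card_fin]
  have : ((p - 1 : ℕ) : F) = (p : F) - 1 := by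
    rw [Nat.cast_sub (by omega), Nat.cast_one]
  simp only [one_pow, nsmul_eq_mul, mul_one, this, hcast, zero_sub]

end FRField

section SumExp
variable {A : Type*} [CommRing A] {k : ℕ}

lemma sum_sub_sq_expand (x y : Fin k → A) :
    ∑ j, (x j - y j) ^ 2 =
      ∑ j, x j ^ 2 - 2 * ∑ j, x j * y j + ∑ j, y j ^ 2 := by
  rw [Finset.mul_sum, ← Finset.sum_sub_distrib, ← Finset.sum_add_distrib]
  exact Finset.sum_congr rfl fun j _ => by ring

lemma sum_lincomb_sq_expand (u v : A) (x y : Fin k → A) :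
    ∑ j, (u * x j - v * y j) ^ 2 =
      u ^ 2 * ∑ j, x j ^ 2 - 2 * (u * v) * ∑ j, x j * y j + v ^ 2 * ∑ j, y j ^ 2 := by
  rw [Finset.mul_sum, Finset.mul_sum, Finset.mul_sum, ← Finset.sum_sub_distrib,
    ← Finset.sum_add_distrib]
  exact Finset.sum_congr rfl fun j _ => by ring

end SumExp

section PolyFR
variable {F : Type} [Field F]

/-- over an infinite field whose sums of squares behave, polynomials inherit it -/
lemma fr_poly (hF0 : ∀ (k : ℕ) (f : Fin k → F), ∑ j, f j ^ 2 = 0 → ∀ j, f j = 0) :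
    ∀ (k : ℕ) (s : Fin k → F[X]), ∑ j, s j ^ 2 = 0 → ∀ j, s j = 0 := by
  haveI : CharZero F := fr_charZero hF0
  intro k s hsum j
  by_contra hj
  obtain ⟨r, hr⟩ := (s j).exists_eval_ne_zero_of_natDegree_lt_card hj
    (lt_of_lt_of_le (Cardinal.nat_lt_aleph0 _) (Cardinal.infinite_iff.mp inferInstance))
  apply hr
  have := hF0 k (fun i => (s i).eval r) ?_ j
  · exact this
  · have : (∑ i, s i ^ 2).eval r = 0 := by rw [hsum, eval_zero]
    rw [eval_finset_sum] at this
    simpa using this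

lemma fr_mv {m : ℕ} [Infinite F] [IsDomain F]
    (hF0 : ∀ (k : ℕ) (f : Fin k → F), ∑ j, f j ^ 2 = 0 → ∀ j, f j = 0) :
    ∀ (k : ℕ) (s : Fin k → MvPolynomial (Fin m) F), ∑ j, s j ^ 2 = 0 → ∀ j, s j = 0 := by
  intro k s hsum j
  by_contra hj
  have : ∃ x : Fin m → F, MvPolynomial.eval x (s j) ≠ 0 := by
    by_contra hall
    push_neg at hall
    exact hj (MvPolynomial.funext (q := 0) (by simpa using hall))
  obtain ⟨x, hx⟩ := this
  apply hx
  have := hF0 k (fun i => MvPolynomial.eval x (s i)) ?_ j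
  · exact this
  · have : MvPolynomial.eval x (∑ i, s i ^ 2) = 0 := by rw [hsum, map_zero]
    simpa using this

end PolyFR

section FracFR
variable {R : Type} [CommRing R] [IsDomain R]

lemma fr_frac (hR : ∀ (k : ℕ) (s : Fin k → R), ∑ j, s j ^ 2 = 0 → ∀ j, s j = 0) :
    ∀ (k : ℕ) (f : Fin k → FractionRing R), ∑ j, f j ^ 2 = 0 → ∀ j, f j = 0 := by
  intro k f hsum j
  obtain ⟨b0, hb0⟩ := IsLocalization.exist_integer_multiples (nonZeroDivisors R)
    Finset.univ f
  choose p hp using fun i => hb0 i (Finset.mem_univ i)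
  by_contra hj
  have halg : Function.Injective (algebraMap R (FractionRing R)) :=
    IsFractionRing.injective R (FractionRing R)
  have key : ∑ i, p i ^ 2 = 0 := by
    apply halg
    rw [map_sum, map_zero]
    have : ∑ i, algebraMap R (FractionRing R) (p i) ^ 2
        = algebraMap R (FractionRing R) (b0 : R) ^ 2 * ∑ i, f i ^ 2 := by
      rw [Finset.mul_sum]
      refine Finset.sum_congr rfl fun i _ => ?_
      rw [hp i, Algebra.smul_def, mul_pow]
    simpa [hsum] using this
  have hpj : p j = 0 := hR k p key j
  have : algebraMap R (FractionRing R) (b0 : R) * f j = 0 := by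
    rw [← Algebra.smul_def, ← hp j, hpj, map_zero]
  rcases mul_eq_zero.mp this with h | h
  · exact nonZeroDivisors.coe_ne_zero b0 (halg (by simpa using h))
  · exact hj h

end FracFR

section CoeffSq
variable {F : Type*} [CommRing F]

lemma coeff_sq_two_max {g : F[X]} {D : ℕ} (hg : g.natDegree ≤ D) :
    (g ^ 2).coeff (2 * D) = g.coeff D ^ 2 := by
  rw [sq, coeff_mul, sq]
  rw [Finset.sum_eq_single (D, D)]
  · intro b hb hne
    rw [Finset.HasAntidiagonal.mem_antidiagonal] at hb
    rcases lt_or_ge D b.1 with h | h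
    · rw [coeff_eq_zero_of_natDegree_lt (lt_of_le_of_lt hg h), zero_mul]
    · have : D < b.2 := by
        rcases lt_or_ge D b.2 with h2 | h2
        · exact h2
        · exact absurd (Prod.ext (by omega) (by omega)) hne
      rw [coeff_eq_zero_of_natDegree_lt (lt_of_le_of_lt hg this), mul_zero]
  · intro h
    exact absurd (Finset.HasAntidiagonal.mem_antidiagonal.mpr (by omega)) h

end CoeffSq
section Cassels
variable {F : Type} [Field F]

lemma cassels (hFP : ∀ (k : ℕ) (s : Fin k → F[X]), ∑ j, s j ^ 2 = 0 → ∀ j, s j = 0)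
    (p : F[X]) (n : ℕ) :
    ∀ (N : ℕ) (h : F[X]), h.natDegree ≤ N → h ≠ 0 →
      ∀ g : Fin n → F[X], p * h ^ 2 = ∑ j, g j ^ 2 →
        ∃ g' : Fin n → F[X], p = ∑ j, g' j ^ 2 := by
  intro N
  induction N with
  | zero =>
    intro h hdeg hne g hrep
    obtain ⟨c, hC⟩ : ∃ c, h = C c := ⟨h.coeff 0, eq_C_of_natDegree_le_zero hdeg⟩
    have hc0 : c ≠ 0 := fun h0 => hne (by rw [hC, h0, map_zero])
    refine ⟨fun j => g j * C c⁻¹, ?_⟩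
    have : ∑ j, (g j * C c⁻¹) ^ 2 = (∑ j, g j ^ 2) * (C c⁻¹) ^ 2 := by
      rw [Finset.sum_mul]
      exact Finset.sum_congr rfl fun j _ => by ring
    rw [this, ← hrep, hC, mul_assoc, ← mul_pow, ← C_mul, mul_inv_cancel₀ hc0, map_one,
      one_pow, mul_one]
  | succ N ih =>
    intro h hdeg hne g hrep
    rcases le_or_gt h.natDegree N with hle | hgt
    · exact ih h hle hne g hrep
    have hdN : h.natDegree = N + 1 := by omega
    -- normalize to a monic denominator
    have hl0 : h.leadingCoeff ≠ 0 := Polynomial.leadingCoeff_ne_zero.mpr hne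
    set h1 : F[X] := h * C h.leadingCoeff⁻¹ with hh1
    have hmonic : h1.Monic := Polynomial.monic_mul_leadingCoeff_inv hne
    have hne1 : h1 ≠ 0 := hmonic.ne_zero
    have hdeg1 : h1.natDegree = N + 1 := by
      rw [hh1, Polynomial.natDegree_mul_leadingCoeff_inv h hne, hdN]
    set g1 : Fin n → F[X] := fun j => g j * C h.leadingCoeff⁻¹ with hg1
    have hrep1 : p * h1 ^ 2 = ∑ j, g1 j ^ 2 := by
      have : ∑ j, g1 j ^ 2 = (∑ j, g j ^ 2) * (C h.leadingCoeff⁻¹) ^ 2 := by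
        rw [Finset.sum_mul]; exact Finset.sum_congr rfl fun j _ => by ring
      rw [this, ← hrep, hh1]; ring
    -- division with remainder
    set s : Fin n → F[X] := fun j => g1 j %ₘ h1 with hs
    set q : Fin n → F[X] := fun j => g1 j /ₘ h1 with hq
    have hsq : ∀ j, g1 j - h1 * q j = s j := fun j => by
      have := Polynomial.modByMonic_add_div (g1 j) h1
      rw [hs, hq]; linear_combination -this
    have hdegs : ∀ j, (s j).natDegree ≤ N := by
      intro j
      rcases eq_or_ne (s j) 0 with h0 | h0
      · rw [h0]; simp
      · have := Polynomial.degree_modByMonic_lt (g1 j) hmonic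
        have := Polynomial.natDegree_lt_natDegree h0 this
        omega
    set S2 := ∑ j, g1 j ^ 2 with hS2
    set S1 := ∑ j, g1 j * q j with hS1
    set S0 := ∑ j, q j ^ 2 with hS0
    set t := ∑ j, s j ^ 2 with ht
    rcases eq_or_ne t 0 with ht0 | ht0
    · -- all remainders vanish; divide through
      have hz : ∀ j, s j = 0 := hFP n s ht0
      refine ⟨q, mul_left_cancel₀ (pow_ne_zero 2 hne1) ?_⟩
      rw [← mul_comm p (h1 ^2), hrep1, hS2, Finset.mul_sum]
      refine Finset.sum_congr rfl fun j _ => ?_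
      have : g1 j = h1 * q j := by
        have := hsq j; rw [hz j] at this; linear_combination this
      rw [this]; ring
    · -- Cassels' descent step
      have hexp : t = S2 - 2 * h1 * S1 + h1 ^ 2 * S0 := by
        have e1 : t = ∑ j, (g1 j - h1 * q j) ^ 2 :=
          Finset.sum_congr rfl fun j _ => by rw [hsq j]
        rw [e1, sum_sub_sq_expand g1 (fun j => h1 * q j)]
        have e2 : ∑ j, g1 j * (h1 * q j) = h1 * S1 := by
          rw [hS1, Finset.mul_sum]; exact Finset.sum_congr rfl fun j _ => by ring
        have e3 : ∑ j, (h1 * q j) ^ 2 = h1 ^ 2 * S0 := by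
          rw [hS0, Finset.mul_sum]; exact Finset.sum_congr rfl fun j _ => by ring
        rw [e2, e3]; ring
      have hkey1 : h1 * ((S0 - p) * h1 - 2 * (S1 - p * h1)) = t := by
        rw [hexp]; linear_combination hrep1
      have hne' : (S0 - p) * h1 - 2 * (S1 - p * h1) ≠ 0 :=
        right_ne_zero_of_mul (hkey1 ▸ ht0)
      have hkey2 : p * ((S0 - p) * h1 - 2 * (S1 - p * h1)) ^ 2 =
          ∑ j, ((S0 - p) * g1 j - 2 * (S1 - p * h1) * q j) ^ 2 := by
        rw [sum_lincomb_sq_expand (S0 - p) (2 * (S1 - p * h1)) g1 q, ← hS2, ← hS1, ← hS0]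
        linear_combination (S0 - p) ^ 2 * hrep1
      have hdeg' : ((S0 - p) * h1 - 2 * (S1 - p * h1)).natDegree ≤ N := by
        have hdt : t.natDegree ≤ 2 * N := by
          rw [ht]
          refine Polynomial.natDegree_sum_le_of_forall_le _ _ fun j _ => ?_
          calc (s j ^ 2).natDegree ≤ 2 * (s j).natDegree := Polynomial.natDegree_pow_le
            _ ≤ 2 * N := by have := hdegs j; omega
        have := Polynomial.natDegree_mul hne1 hne'
        rw [hkey1] at this
        omega
      exact ih _ hdeg' hne' _ hkey2

end Cassels
section StepDown
variable {F : Type} [Field F]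

lemma reflect (h2 : (2 : F) ≠ 0) {n' : ℕ}
    (a b : Fin (n' + 1) → F) (ε : F) (hε : ε ^ 2 = 1)
    (ha : ∑ j, a j ^ 2 = 1) (hab : ∑ j, a j * b j = 0)
    (hq : 2 - 2 * ε * a 0 ≠ 0) :
    ∃ b' : Fin n' → F, ∑ j, b j ^ 2 = ∑ j, b' j ^ 2 := by
  set e : Fin (n' + 1) → F := fun j => if j = 0 then 1 else 0 with he
  have hee : ∑ j, e j ^ 2 = 1 := by simp [he, Fin.sum_univ_succ, Fin.succ_ne_zero]
  have hae : ∑ j, a j * e j = a 0 := by simp [he, Fin.sum_univ_succ, Fin.succ_ne_zero]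
  have hbe : ∑ j, b j * e j = b 0 := by simp [he, Fin.sum_univ_succ, Fin.succ_ne_zero]
  have hvv : ∑ j, (a j - ε * e j) ^ 2 = 2 - 2 * ε * a 0 := by
    have h := sum_lincomb_sq_expand (1 : F) ε a e
    simp only [one_mul, one_pow] at h
    rw [h, ha, hae, hee]
    linear_combination hε
  have hbv : ∑ j, b j * (a j - ε * e j) = -(ε * b 0) := by
    have h : ∀ j ∈ Finset.univ, b j * (a j - ε * e j)
        = a j * b j - ε * (b j * e j) := fun j _ => by ring
    rw [Finset.sum_congr rfl h, Finset.sum_sub_distrib, hab, ← Finset.mul_sum, hbe]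
    ring
  set C0 : F := 2 * (-(ε * b 0)) / (2 - 2 * ε * a 0) with hC0
  refine ⟨fun j => b j.succ - C0 * (a j.succ - ε * e j.succ), ?_⟩
  have hsum' : ∑ j, (b j - C0 * (a j - ε * e j)) ^ 2 = ∑ j, b j ^ 2 := by
    have h := sum_lincomb_sq_expand (1 : F) C0 b (fun j => a j - ε * e j)
    simp only [one_mul, one_pow] at h
    rw [h, hbv, hvv, hC0]
    field_simp
    ring
  have hb'0 : b 0 - C0 * (a 0 - ε * e 0) = 0 := by
    have he0 : e 0 = 1 := by simp [he]
    rw [he0, hC0]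
    rw [div_mul_eq_mul_div, sub_eq_zero, eq_div_iff hq]
    linear_combination (-2 * b 0) * hε
  rw [← hsum', Fin.sum_univ_succ, hb'0]
  simp

lemma step_down (hF0 : ∀ (k : ℕ) (f : Fin k → F), ∑ j, f j ^ 2 = 0 → ∀ j, f j = 0)
    (c : F) (n : ℕ) (g : Fin n → Polynomial F)
    (hg : Polynomial.X ^ 2 + Polynomial.C c = ∑ j, g j ^ 2) :
    ∃ n', n = n' + 1 ∧ ∃ b : Fin n' → F, c = ∑ j, b j ^ 2 := by
  have h2 : (2 : F) ≠ 0 := fr_two_ne_zero hF0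
  -- n cannot be zero
  rcases n with _ | n'
  · exfalso
    rw [Finset.univ_eq_empty, Finset.sum_empty] at hg
    have := congrArg (fun p => Polynomial.coeff p 2) hg
    simp at this
  refine ⟨n', rfl, ?_⟩
  -- each g j has degree at most 1
  have hdeg : ∀ j, (g j).natDegree ≤ 1 := by
    by_contra hcon
    push_neg at hcon
    obtain ⟨j0, hj0⟩ := hcon
    set D := Finset.univ.sup (fun j => (g j).natDegree) with hD
    have hDle : ∀ j, (g j).natDegree ≤ D := fun j => by
      rw [hD]; exact Finset.le_sup (f := fun j => (g j).natDegree) (Finset.mem_univ j)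
    have hD2 : 2 ≤ D := le_trans hj0 (hDle j0)
    have hcoeff : ∀ j, (g j).coeff D = 0 := by
      apply hF0
      have h1 : (∑ j, g j ^ 2).coeff (2 * D) = ∑ j, (g j).coeff D ^ 2 := by
        rw [finset_sum_coeff]
        exact Finset.sum_congr rfl fun j _ => coeff_sq_two_max (hDle j)
      have h0 : (Polynomial.X ^ 2 + Polynomial.C c : Polynomial F).coeff (2 * D) = 0 := by
        rw [Polynomial.coeff_add, Polynomial.coeff_X_pow, Polynomial.coeff_C,
          if_neg (by omega), if_neg (by omega), add_zero]
      rw [← h1, ← hg, h0]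
    obtain ⟨j1, -, hj1⟩ := Finset.exists_mem_eq_sup Finset.univ Finset.univ_nonempty
      (fun j => (g j).natDegree)
    have hgne : g j1 ≠ 0 := by
      intro hz
      rw [← hD, hz] at hj1
      simp [Polynomial.natDegree_zero] at hj1
      omega
    apply Polynomial.leadingCoeff_ne_zero.mpr hgne
    rw [Polynomial.leadingCoeff, ← hj1, ← hD]
    exact hcoeff j1
  set a : Fin (n' + 1) → F := fun j => (g j).coeff 1 with haa
  set b : Fin (n' + 1) → F := fun j => (g j).coeff 0 with hbb
  have hrepr : ∀ j, g j = Polynomial.C (a j) * Polynomial.X + Polynomial.C (b j) := fun j =>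
    Polynomial.eq_X_add_C_of_degree_le_one (Polynomial.natDegree_le_iff_degree_le.mp (hdeg j))
  have expand : ∀ u w : F, (Polynomial.C u * Polynomial.X + Polynomial.C w) ^ 2
      = Polynomial.C (u ^ 2) * Polynomial.X ^ 2 + Polynomial.C (2 * u * w) * Polynomial.X
        + Polynomial.C (w ^ 2) := by
    intro u w
    rw [map_pow, map_pow, map_mul, map_mul, map_ofNat]
    ring
  have hg' : Polynomial.X ^ 2 + Polynomial.C c
      = ∑ j, (Polynomial.C (a j ^ 2) * Polynomial.X ^ 2
        + Polynomial.C (2 * a j * b j) * Polynomial.X + Polynomial.C (b j ^ 2)) := by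
    rw [hg]
    refine Finset.sum_congr rfl fun j _ => ?_
    rw [hrepr j, expand]
  have key : ∀ k, (Polynomial.X ^ 2 + Polynomial.C c : Polynomial F).coeff k
      = ∑ j, (Polynomial.C (a j ^ 2) * Polynomial.X ^ 2
        + Polynomial.C (2 * a j * b j) * Polynomial.X + Polynomial.C (b j ^ 2)).coeff k := by
    intro k; rw [hg', Polynomial.finset_sum_coeff]
  have hA : ∑ j, a j ^ 2 = 1 := by
    have h := key 2
    simp only [Polynomial.coeff_add, Polynomial.coeff_C_mul, Polynomial.coeff_X_pow,
      Polynomial.coeff_X, Polynomial.coeff_C] at h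
    norm_num at h
    exact h.symm
  have hAB : ∑ j, a j * b j = 0 := by
    have h := key 1
    simp only [Polynomial.coeff_add, Polynomial.coeff_C_mul, Polynomial.coeff_X_pow,
      Polynomial.coeff_X, Polynomial.coeff_C] at h
    norm_num at h
    have h2ab : (2 : F) * ∑ j, a j * b j = 0 := by
      have heq : ∑ i, (2 : F) * (a i * b i) = ∑ i, 2 * a i * b i :=
        Finset.sum_congr rfl fun j _ => by ring
      rw [Finset.mul_sum, heq, ← h]
    exact (mul_eq_zero.mp h2ab).resolve_left h2
  have hCc : c = ∑ j, b j ^ 2 := by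
    have h := key 0
    simp only [Polynomial.coeff_add, Polynomial.coeff_C_mul, Polynomial.coeff_X_pow,
      Polynomial.coeff_X, Polynomial.coeff_C] at h
    norm_num at h
    exact h
  have h4 : (4 : F) ≠ 0 := by
    intro h4
    apply h2
    have : (2 : F) * 2 = 0 := by linear_combination h4
    rcases mul_eq_zero.mp this with h | h <;> exact h
  rcases eq_or_ne (2 - 2 * (1 : F) * a 0) 0 with hq | hq
  · have hq' : 2 - 2 * (-1 : F) * a 0 ≠ 0 := by
      intro h0
      apply h4
      linear_combination hq + h0
    obtain ⟨b', hb'⟩ := reflect h2 a b (-1) (by norm_num) hA hAB hq'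
    exact ⟨b', hCc.trans hb'⟩
  · obtain ⟨b', hb'⟩ := reflect h2 a b 1 (by norm_num) hA hAB hq
    exact ⟨b', hCc.trans hb'⟩

end StepDown
section Main
variable {K : Type} [Field K]

lemma main_induction (hK0 : ∀ (k : ℕ) (f : Fin k → K), ∑ j, f j ^ 2 = 0 → ∀ j, f j = 0)
    (d : K) :
    ∀ (m n : ℕ), n < m → ∀ (h : MvPolynomial (Fin m) K) (g : Fin n → MvPolynomial (Fin m) K),
      h ≠ 0 →
      (MvPolynomial.C d + ∑ j, MvPolynomial.X j ^ 2) * h ^ 2 ≠ ∑ j, g j ^ 2 := by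
  haveI : CharZero K := fr_charZero hK0
  intro m
  induction m with
  | zero => intro n hn; omega
  | succ m ih =>
    intro n hn h g hne hrep
    set R := MvPolynomial (Fin m) K with hR
    set Fr := FractionRing R with hFr
    have hR0 : ∀ (k : ℕ) (s : Fin k → R), ∑ j, s j ^ 2 = 0 → ∀ j, s j = 0 := fr_mv hK0
    have hF0 : ∀ (k : ℕ) (f : Fin k → Fr), ∑ j, f j ^ 2 = 0 → ∀ j, f j = 0 := fr_frac hR0
    have hFP : ∀ (k : ℕ) (s : Fin k → Polynomial Fr), ∑ j, s j ^ 2 = 0 → ∀ j, s j = 0 :=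
      fr_poly hF0
    set φ := MvPolynomial.finSuccEquiv K m with hφ
    set c : R := MvPolynomial.C d + ∑ j, MvPolynomial.X j ^ 2 with hc
    have hCd : φ (MvPolynomial.C d) = Polynomial.C (MvPolynomial.C d) := by
      have h1 : (MvPolynomial.C d : MvPolynomial (Fin (m + 1)) K)
          = algebraMap K _ d := rfl
      rw [h1, AlgEquiv.commutes]
      simp [Polynomial.algebraMap_apply, MvPolynomial.algebraMap_eq]
    have hφE : φ (MvPolynomial.C d + ∑ j : Fin (m + 1), MvPolynomial.X j ^ 2)
        = Polynomial.X ^ 2 + Polynomial.C c := by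
      rw [map_add, hCd, map_sum, Fin.sum_univ_succ]
      simp only [hφ, map_pow, MvPolynomial.finSuccEquiv_X_zero,
        MvPolynomial.finSuccEquiv_X_succ]
      rw [hc, map_add, map_sum]
      simp only [map_pow]
      ring
    -- apply φ to the representation
    have hrep2 : (Polynomial.X ^ 2 + Polynomial.C c) * (φ h) ^ 2 = ∑ j, (φ (g j)) ^ 2 := by
      have := congrArg φ hrep
      rw [map_mul, map_pow, map_sum, hφE] at this
      simpa [map_pow] using this
    -- push into the fraction field
    set A := algebraMap R Fr with hA
    have hAinj : Function.Injective A := IsFractionRing.injective R Fr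
    have hmapinj : Function.Injective (Polynomial.map A) :=
      fun p q hpq => Polynomial.map_injective A hAinj hpq
    have hrep3 : (Polynomial.X ^ 2 + Polynomial.C (A c)) * ((φ h).map A) ^ 2
        = ∑ j, ((φ (g j)).map A) ^ 2 := by
      have := congrArg (Polynomial.map A) hrep2
      rw [Polynomial.map_mul, Polynomial.map_pow, Polynomial.map_add, Polynomial.map_pow,
        Polynomial.map_X, Polynomial.map_C] at this
      rw [this, Polynomial.map_sum]
      exact Finset.sum_congr rfl fun j _ => by rw [Polynomial.map_pow]
    have hφh : (φ h).map A ≠ 0 := by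
      intro h0
      apply hne
      have : φ h = 0 := hmapinj (by simpa using h0)
      simpa using φ.injective (by simpa using this)
    -- Cassels: remove the denominator
    obtain ⟨g', hg'⟩ := cassels hFP (Polynomial.X ^ 2 + Polynomial.C (A c)) n
      ((φ h).map A).natDegree ((φ h).map A) le_rfl hφh _ hrep3
    -- drop one square
    obtain ⟨n', rfl, b, hb⟩ := step_down hF0 (A c) n g' hg'
    -- clear denominators in Fr
    obtain ⟨b0, hb0⟩ := IsLocalization.exist_integer_multiples (nonZeroDivisors R)
      Finset.univ b
    choose p hp using fun i => hb0 i (Finset.mem_univ i)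
    have hkey : c * (b0 : R) ^ 2 = ∑ j, p j ^ 2 := by
      apply hAinj
      rw [map_mul, map_pow, map_sum, hb, Finset.sum_mul]
      refine Finset.sum_congr rfl fun j _ => ?_
      rw [map_pow, hp j, Algebra.smul_def]
      ring
    exact ih n' (by omega) (b0 : R) p (nonZeroDivisors.coe_ne_zero b0) hkey

end Main

/-- let `F = K(x₁, …, x_m)` be the rational function field in `m = 4^i`
variables over a formally real field `K`, and let `d ∈ K` be a sum of squares in `K`.
Then `e = d + x₁² + ⋯ + x_m²` is not a sum of fewer than `4^i` squares in `F`. -/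
theorem sum_of_squares_length_in_rational_function_field
    (K : Type) [Field K]
    -- `K` is formally real: `-1` is not a sum of squares in `K`
    (hreal : ∀ (n : ℕ) (f : Fin n → K), ∑ j, (f j) ^ 2 ≠ -1)
    (i : ℕ) (m : ℕ) (hm : m = 4 ^ i)
    (d : K) (hd : ∃ (n : ℕ) (f : Fin n → K), d = ∑ j, (f j) ^ 2) :
    ∀ n : ℕ, n < 4 ^ i →
      ∀ f : Fin n → FractionRing (MvPolynomial (Fin m) K),
        (algebraMap (MvPolynomial (Fin m) K) (FractionRing (MvPolynomial (Fin m) K))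
            (MvPolynomial.C d + ∑ j : Fin m, (MvPolynomial.X j) ^ 2)) ≠
          ∑ j, (f j) ^ 2 := by
  intro n hn f heq
  have hK0 : ∀ (k : ℕ) (f : Fin k → K), ∑ j, f j ^ 2 = 0 → ∀ j, f j = 0 :=
    fr_sum_sq_eq_zero hreal
  set R := MvPolynomial (Fin m) K with hR
  set A := algebraMap R (FractionRing R) with hA
  have hAinj : Function.Injective A := IsFractionRing.injective R (FractionRing R)
  obtain ⟨b0, hb0⟩ := IsLocalization.exist_integer_multiples (nonZeroDivisors R)
    Finset.univ f
  choose p hp using fun i => hb0 i (Finset.mem_univ i)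
  have hkey : (MvPolynomial.C d + ∑ j, MvPolynomial.X j ^ 2) * (b0 : R) ^ 2
      = ∑ j, p j ^ 2 := by
    apply hAinj
    rw [map_mul, map_pow, map_sum, heq, Finset.sum_mul]
    refine Finset.sum_congr rfl fun j _ => ?_
    rw [map_pow, hp j, Algebra.smul_def]
    ring
  exact main_induction hK0 d m n (hm ▸ hn) (b0 : R) p (nonZeroDivisors.coe_ne_zero b0) hkey
end

section
/- Let p be a prime and f ≥ 1. There exists a monic polynomial g ∈ ℤ[X] such that for every valued field (F, v) whose residue field is an extension of 𝔽_p of degree at most f (or more generally whose residue field contains no root of the reduction of g), and for all x, y ∈ F, the homogenization φ(x,y) = y^{deg g}·g(x/y) satisfies v(φ(x,y)) = deg(g)·min(v(x), v(y)). -/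
/-- The evaluation of the homogenization of a polynomial `g ∈ ℤ[X]` (with respect to its
degree) at a pair of field elements: `φ(x, y) = ∑ gᵢ xⁱ y^(deg g − i) = y^(deg g) g(x/y)`. -/
noncomputable def homogEval {F : Type*} [Field F] (g : Polynomial ℤ) (x y : F) : F :=
  ∑ i ∈ Finset.range (g.natDegree + 1), (g.coeff i : F) * x ^ i * y ^ (g.natDegree - i)

section AuxLemmas
open Polynomial
lemma aux_exists (p : ℕ) (hp : p.Prime) (n : ℕ) (hn : n ≠ 0) :
    ∃ g : Polynomial ℤ, g.Monic ∧ g.natDegree = n ∧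
      Irreducible (g.map (Int.castRingHom (ZMod p))) := by
  haveI : Fact p.Prime := ⟨hp⟩
  obtain ⟨α, hα⟩ := Field.exists_primitive_element_of_finite_top (ZMod p) (GaloisField p n)
  set h := minpoly (ZMod p) α with hh
  have hint : IsIntegral (ZMod p) α := Algebra.IsIntegral.isIntegral α
  have hmon : h.Monic := minpoly.monic hint
  have hirr : Irreducible h := minpoly.irreducible hint
  have hdeg : h.natDegree = n := by
    have := IntermediateField.adjoin.finrank hint
    rw [hα, IntermediateField.finrank_top'] at this
    rw [← this, GaloisField.finrank p hn]
  have hlift : h ∈ Polynomial.lifts (Int.castRingHom (ZMod p)) := by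
    rw [Polynomial.lifts_iff_coeff_lifts]
    intro i
    exact ⟨(h.coeff i).val, by simp⟩
  obtain ⟨g, hg1, hg2, hg3⟩ := Polynomial.lifts_and_degree_eq_and_monic hlift hmon
  refine ⟨g, hg3, ?_, by rwa [hg1]⟩
  have := hg3.natDegree_map (Int.castRingHom (ZMod p))
  rw [hg1, hdeg] at this
  exact this.symm

lemma aux_noroot (p : ℕ) (hp : p.Prime) (f : ℕ) (g : Polynomial ℤ)
    (hgmon : g.Monic) (hdeg : g.natDegree = f + 1)
    (hirr : Irreducible (g.map (Int.castRingHom (ZMod p))))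
    (K : Type) [Field K] [Fintype K] [CharP K p] (hcard : Fintype.card K ≤ p ^ f)
    (a : K) : (g.map (Int.castRingHom K)).eval a ≠ 0 := by
  haveI : Fact p.Prime := ⟨hp⟩
  letI : Algebra (ZMod p) K := ZMod.algebra K p
  haveI : FiniteDimensional (ZMod p) K := Module.Finite.of_finite
  intro h0
  have hmap : g.map (Int.castRingHom K)
      = (g.map (Int.castRingHom (ZMod p))).map (algebraMap (ZMod p) K) := by
    rw [Polynomial.map_map]
    congr 1
    exact Subsingleton.elim _ _
  have haev : Polynomial.aeval a (g.map (Int.castRingHom (ZMod p))) = 0 := by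
    rw [Polynomial.aeval_def, ← Polynomial.eval_map, ← hmap]
    exact h0
  have hmon : (g.map (Int.castRingHom (ZMod p))).Monic := hgmon.map _
  have hmin : minpoly (ZMod p) a = g.map (Int.castRingHom (ZMod p)) :=
    (minpoly.eq_of_irreducible_of_monic hirr haev hmon).symm
  have hle : (minpoly (ZMod p) a).natDegree ≤ Module.finrank (ZMod p) K :=
    minpoly.natDegree_le a
  rw [hmin] at hle
  have hdeg' : (g.map (Int.castRingHom (ZMod p))).natDegree = f + 1 := by
    rw [hgmon.natDegree_map, hdeg]
  have hcard' : Fintype.card K = p ^ Module.finrank (ZMod p) K := by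
    have := Module.card_eq_pow_finrank (K := ZMod p) (V := K)
    rwa [ZMod.card] at this
  rw [hcard'] at hcard
  have : p ^ (f+1) ≤ p ^ Module.finrank (ZMod p) K :=
    Nat.pow_le_pow_right hp.one_lt.le (hdeg' ▸ hle)
  have : p ^ (f+1) ≤ p ^ f := le_trans this hcard
  exact absurd (Nat.pow_le_pow_iff_right hp.one_lt |>.mp this) (by omega)

lemma val_intCast_le_one {F : Type*} [Field F] {Γ₀ : Type*} [LinearOrderedCommGroupWithZero Γ₀]
    (v : Valuation F Γ₀) (m : ℤ) : v (m : F) ≤ 1 := by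
  have hnat : ∀ k : ℕ, v (k : F) ≤ 1 := by
    intro k
    induction k with
    | zero => simp
    | succ k ih =>
      push_cast
      exact le_trans (v.map_add _ _) (max_le ih (by simp))
  obtain ⟨k, rfl | rfl⟩ := Int.eq_nat_or_neg m
  · exact_mod_cast hnat k
  · push_cast
    rw [v.map_neg]
    exact hnat k

lemma aux_eval {F : Type} [Field F] {Γ₀ : Type} [LinearOrderedCommGroupWithZero Γ₀]
    (v : Valuation F Γ₀) (g : Polynomial ℤ) (hg : g.Monic)
    (hres : ∀ a : IsLocalRing.ResidueField v.valuationSubring,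
      (g.map (Int.castRingHom (IsLocalRing.ResidueField v.valuationSubring))).eval a ≠ 0)
    (z : F) : v ((g.map (Int.castRingHom F)).eval z) = max (v z) 1 ^ g.natDegree := by
  set A := v.valuationSubring with hA
  rcases le_or_gt (v z) 1 with hz | hz
  · rw [max_eq_right hz, one_pow]
    set z' : A := ⟨z, hz⟩ with hz'
    set w' : A := (g.map (Int.castRingHom A)).eval z' with hw'
    have hcoe : (w' : F) = (g.map (Int.castRingHom F)).eval z := by
      show A.subtype w' = _
      rw [hw', Polynomial.eval_map, Polynomial.eval_map, Polynomial.hom_eval₂]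
      congr 1 <;> first | exact Subsingleton.elim _ _ | rfl
    have hresw : IsLocalRing.residue A w' ≠ 0 := by
      have h1 : IsLocalRing.residue A w'
          = (g.map (Int.castRingHom (IsLocalRing.ResidueField A))).eval
              (IsLocalRing.residue A z') := by
        rw [hw', Polynomial.eval_map, Polynomial.eval_map, Polynomial.hom_eval₂]
        congr 1 <;> first | exact Subsingleton.elim _ _ | rfl
      rw [h1]
      exact hres _
    have hunit : IsUnit w' := (IsLocalRing.residue_ne_zero_iff_isUnit w').mp hresw
    have hval1 : A.valuation (w' : F) = 1 := (A.valuation_eq_one_iff w').mp hunit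
    have := ((Valuation.isEquiv_valuation_valuationSubring v).eq_one_iff_eq_one
        (x := (w' : F))).mpr hval1
    rwa [hcoe] at this
  · rw [max_eq_left hz.le]
    set gF := g.map (Int.castRingHom F) with hgF
    have hmonF : gF.Monic := hg.map _
    have hn : gF.natDegree = g.natDegree := hg.natDegree_map _
    have hz0 : v z ≠ 0 := fun h => by simp [h] at hz
    classical
    have hc1 : gF.coeff g.natDegree = 1 := by rw [← hn]; exact hmonF.coeff_natDegree
    rw [Polynomial.eval_eq_sum_range, hn]
    rw [v.map_sum_eq_of_lt (j := g.natDegree) (Finset.self_mem_range_succ _) ?_]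
    · rw [hc1, one_mul, v.map_pow]
    · intro i hi
      simp only [Finset.mem_sdiff, Finset.mem_range, Finset.mem_singleton] at hi
      have hilt : i < g.natDegree := lt_of_le_of_ne (Nat.lt_succ_iff.mp hi.1) hi.2
      rw [v.map_mul, v.map_pow]
      have hc : v (gF.coeff i) ≤ 1 := by
        rw [hgF, Polynomial.coeff_map]
        exact val_intCast_le_one v _
      calc v (gF.coeff i) * v z ^ i ≤ 1 * v z ^ i := by
            exact mul_le_mul_left hc _
        _ = v z ^ i := one_mul _
        _ < v z ^ g.natDegree := by
            exact pow_lt_pow_right₀ hz hilt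
        _ = v (gF.coeff g.natDegree * z ^ g.natDegree) := by
            rw [hc1, one_mul, v.map_pow]

lemma homogEval_zero {F : Type} [Field F] (g : Polynomial ℤ) (hg : g.Monic) (x : F) :
    homogEval g x 0 = x ^ g.natDegree := by
  rw [homogEval, Finset.sum_eq_single g.natDegree]
  · rw [hg.coeff_natDegree, Nat.sub_self, pow_zero, mul_one, Int.cast_one, one_mul]
  · intro b hb hbn
    rw [Finset.mem_range] at hb
    rw [zero_pow (by omega), mul_zero]
  · intro h
    exact absurd (Finset.self_mem_range_succ _) h

lemma homogEval_eq {F : Type} [Field F] (g : Polynomial ℤ) (hg : g.Monic) (x y : F)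
    (hy : y ≠ 0) :
    homogEval g x y = y ^ g.natDegree * (g.map (Int.castRingHom F)).eval (x / y) := by
  have hn : (g.map (Int.castRingHom F)).natDegree = g.natDegree := hg.natDegree_map _
  rw [homogEval, Polynomial.eval_eq_sum_range, hn, Finset.mul_sum]
  refine Finset.sum_congr rfl fun i hi => ?_
  rw [Finset.mem_range, Nat.lt_succ_iff] at hi
  rw [Polynomial.coeff_map]
  have hyi : y ^ g.natDegree = y ^ (g.natDegree - i) * y ^ i := by
    rw [← pow_add]
    congr 1
    omega
  rw [div_pow, hyi]
  simp only [eq_intCast]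
  field_simp

lemma aux_homog {F : Type} [Field F] {Γ₀ : Type} [LinearOrderedCommGroupWithZero Γ₀]
    (v : Valuation F Γ₀) (g : Polynomial ℤ) (hg : g.Monic)
    (hres : ∀ a : IsLocalRing.ResidueField v.valuationSubring,
      (g.map (Int.castRingHom (IsLocalRing.ResidueField v.valuationSubring))).eval a ≠ 0)
    (x y : F) : v (homogEval g x y) = max (v x) (v y) ^ g.natDegree := by
  by_cases hy : y = 0
  · subst hy
    rw [homogEval_zero g hg, v.map_pow, v.map_zero, max_eq_left zero_le']
  · have hvy : v y ≠ 0 := v.ne_zero_iff.mpr hy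
    rw [homogEval_eq g hg x y hy, v.map_mul, v.map_pow, aux_eval v g hg hres, ← mul_pow]
    congr 1
    rw [map_div₀]
    rcases le_total (v x) (v y) with h | h
    · rw [max_eq_right h, max_eq_right, mul_one]
      rw [div_le_one₀ (zero_lt_iff.mpr hvy)]
      exact h
    · rw [max_eq_left h, max_eq_left, mul_comm, div_mul_cancel₀ _ hvy]
      rw [one_le_div₀ (zero_lt_iff.mpr hvy)]
      exact h

end AuxLemmas

/-- for a prime `p` and `f ≥ 1` there is a monic `g ∈ ℤ[X]` such that no
extension of `𝔽_p` of degree at most `f` contains a root of the reduction of `g`, and for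
every valued field `(F, v)` whose residue field contains no root of the reduction of `g`,
the homogenization satisfies `v(φ(x,y)) = deg(g)·min(v(x), v(y))` (multiplicatively:
`v(φ(x,y)) = max(v x, v y) ^ deg g`, since Mathlib valuations are multiplicative). -/
theorem exists_monic_poly_homog_valuation (p : ℕ) (hp : p.Prime) (f : ℕ) (hf : 1 ≤ f) :
    ∃ g : Polynomial ℤ, g.Monic ∧
      -- the reduction of `g` has no root in any extension of `𝔽_p` of degree at most `f`
      (∀ (K : Type) (_ : Field K) (_ : Fintype K) (_ : CharP K p),
        Fintype.card K ≤ p ^ f → ∀ a : K, (g.map (Int.castRingHom K)).eval a ≠ 0) ∧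
      -- for every valued field whose residue field contains no root of the reduction of `g`
      (∀ (F : Type) (_ : Field F) (Γ₀ : Type) (_ : LinearOrderedCommGroupWithZero Γ₀)
          (v : Valuation F Γ₀),
        (∀ a : IsLocalRing.ResidueField v.valuationSubring,
            (g.map (Int.castRingHom (IsLocalRing.ResidueField v.valuationSubring))).eval a
              ≠ 0) →
        ∀ x y : F, v (homogEval g x y) = max (v x) (v y) ^ g.natDegree) := by
  obtain ⟨g, hmon, hdeg, hirr⟩ := aux_exists p hp (f + 1) (by omega)
  refine ⟨g, hmon, ?_, ?_⟩
  · intro K _ _ _ hcard a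
    exact aux_noroot p hp f g hmon hdeg hirr K hcard a
  · intro F _ Γ₀ _ v hres x y
    exact aux_homog v g hmon hres x y
end

section
/- Let F be a real closed field, ≤ its unique ordering, and v a non-trivial ≤-convex valuation on F. Then the residue field Fv, equipped with the ordering induced by ≤, is real closed, the value group vF is divisible, and (F, v) is henselian. -/
/-- `(K, P)` is a real closed ordered field. -/
def IsRealClosedCone (K : Type*) [Field K] (P : Set K) : Prop :=
  IsOrderingCone K P ∧ (∀ a ∈ P, ∃ b : K, b ^ 2 = a) ∧
    ∀ p : Polynomial K, Odd p.natDegree → ∃ x : K, p.eval x = 0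

/-- The ordering induced on the residue field of a convex valuation. -/
def residueCone (F : Type*) [Field F] [LinearOrder F] [IsStrictOrderedRing F] {Γ₀ : Type*}
    [LinearOrderedCommGroupWithZero Γ₀] (v : Valuation F Γ₀) :
    Set (IsLocalRing.ResidueField v.valuationSubring) :=
  {a | ∃ x : v.valuationSubring, 0 ≤ (x : F) ∧ IsLocalRing.residue v.valuationSubring x = a}

section Aux
variable {F : Type} [Field F] [LinearOrder F] [IsStrictOrderedRing F]

lemma rc_sqrt (hF : IsRealClosedLOF F) {a : F} (ha : 0 ≤ a) : ∃ b : F, 0 ≤ b ∧ b ^ 2 = a := by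
  obtain ⟨y, hy⟩ := hF.1 a ha
  exact ⟨|y|, abs_nonneg y, by rw [sq_abs, hy]⟩

lemma rc_nthRoot (hF : IsRealClosedLOF F) :
    ∀ n : ℕ, 0 < n → ∀ a : F, 0 ≤ a → ∃ b : F, 0 ≤ b ∧ b ^ n = a := by
  intro n
  induction n using Nat.strong_induction_on with
  | _ n ih =>
    intro hn a ha
    rcases Nat.even_or_odd n with he | ho
    · obtain ⟨m, hm⟩ := he
      have hm0 : 0 < m := by omega
      obtain ⟨s, hs0, hs⟩ := rc_sqrt hF ha
      obtain ⟨b, hb0, hb⟩ := ih m (by omega) hm0 s hs0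
      refine ⟨b, hb0, ?_⟩
      rw [hm, pow_add, hb, ← sq, hs]
    · obtain ⟨x, hx⟩ := hF.2 (Polynomial.X ^ n - Polynomial.C a)
        (by rwa [Polynomial.natDegree_X_pow_sub_C])
      have hxa : x ^ n = a := by
        simp only [Polynomial.eval_sub, Polynomial.eval_pow, Polynomial.eval_X,
          Polynomial.eval_C, sub_eq_zero] at hx
        exact hx
      exact ⟨|x|, abs_nonneg x, by rw [← abs_pow, hxa, abs_of_nonneg ha]⟩

variable {Γ₀ : Type} [LinearOrderedCommGroupWithZero Γ₀]

lemma val_mono (v : Valuation F Γ₀)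
    (hconv : ∀ x y : F, 0 ≤ x → x ≤ y → v y ≤ 1 → v x ≤ 1)
    {x y : F} (hx : 0 ≤ x) (hxy : x ≤ y) : v x ≤ v y := by
  rcases eq_or_lt_of_le hx with hx0 | hx0
  · rw [← hx0]; simp
  have hy0 : 0 < y := lt_of_lt_of_le hx0 hxy
  have h2 : v (x / y) ≤ 1 :=
    hconv _ 1 (div_pos hx0 hy0).le ((div_le_one hy0).mpr hxy) (by simp)
  calc v x = v (x / y) * v y := by rw [← v.map_mul, div_mul_cancel₀ _ (ne_of_gt hy0)]
  _ ≤ 1 * v y := mul_le_mul_left h2 _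
  _ = v y := one_mul _

lemma val_abs (v : Valuation F Γ₀) (x : F) : v |x| = v x := by
  rcases abs_choice x with h | h <;> rw [h]
  exact v.map_neg x

lemma val_sign_pos (v : Valuation F Γ₀)
    (hconv : ∀ x y : F, 0 ≤ x → x ≤ y → v y ≤ 1 → v x ≤ 1)
    {x y : F} (h : v (x - y) < v y) (hy : 0 < y) : 0 < x := by
  by_contra hx
  push_neg at hx
  have h1 : y ≤ y - x := by linarith
  have h2 : v y ≤ v (y - x) := val_mono v hconv hy.le h1
  rw [show y - x = -(x - y) by ring, v.map_neg] at h2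
  exact absurd h (not_lt.mpr h2)

lemma val_sign_neg (v : Valuation F Γ₀)
    (hconv : ∀ x y : F, 0 ≤ x → x ≤ y → v y ≤ 1 → v x ≤ 1)
    {x y : F} (h : v (x - y) < v y) (hy : y < 0) : x < 0 := by
  have h' : v (-x - -y) < v (-y) := by
    rw [show -x - -y = -(x - y) by ring, v.map_neg, v.map_neg]; exact h
  have := val_sign_pos v hconv h' (by linarith)
  linarith

lemma val_isUnit (v : Valuation F Γ₀) (x : v.valuationSubring) :
    IsUnit x ↔ v (x : F) = 1 := by
  constructor
  · rintro ⟨u, rfl⟩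
    have h1 : ((u : v.valuationSubring) : F) * (((u⁻¹ : _) : v.valuationSubring) : F) = 1 := by
      norm_cast
      simp
    have h2 : v ((u : v.valuationSubring) : F) * v (((u⁻¹ : _) : v.valuationSubring) : F) = 1 := by
      rw [← v.map_mul, h1, v.map_one]
    have ha := (u : v.valuationSubring).2
    have hb := ((u⁻¹ : _) : v.valuationSubring).2
    rw [Valuation.mem_valuationSubring_iff] at ha hb
    refine le_antisymm ha ?_
    calc (1 : Γ₀) = _ * _ := h2.symm
    _ ≤ v ((u : v.valuationSubring) : F) * 1 := mul_le_mul_right hb _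
    _ = v ((u : v.valuationSubring) : F) := mul_one _
  · intro h
    have hx0 : (x : F) ≠ 0 := by
      intro h0
      rw [h0, v.map_zero] at h
      exact zero_ne_one h
    refine isUnit_iff_exists.mpr ⟨⟨(x : F)⁻¹, ?_⟩, ?_, ?_⟩
    · rw [Valuation.mem_valuationSubring_iff, map_inv₀, h, inv_one]
    · exact Subtype.ext (mul_inv_cancel₀ hx0)
    · exact Subtype.ext (inv_mul_cancel₀ hx0)

lemma val_mem_maximalIdeal (v : Valuation F Γ₀) (x : v.valuationSubring) :
    x ∈ IsLocalRing.maximalIdeal v.valuationSubring ↔ v (x : F) < 1 := by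
  rw [IsLocalRing.mem_maximalIdeal, mem_nonunits_iff, val_isUnit]
  constructor
  · intro h
    exact lt_of_le_of_ne ((Valuation.mem_valuationSubring_iff v _).mp x.2) h
  · exact ne_of_lt

lemma root_val_le_one (v : Valuation F Γ₀) {Q : Polynomial v.valuationSubring} (hQ : Q.Monic)
    {z : F} (hz : (Q.map (algebraMap v.valuationSubring F)).eval z = 0) : v z ≤ 1 := by
  by_contra h
  push_neg at h
  set QF := Q.map (algebraMap v.valuationSubring F) with hQF
  have hn : QF.natDegree = Q.natDegree := hQ.natDegree_map _
  set n := Q.natDegree with hnn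
  have hn1 : 1 ≤ n := by
    by_contra h0
    push_neg at h0
    have hQ1 : Q = 1 := (hQ.natDegree_eq_zero).mp (by omega)
    simp only [hQF, hQ1, Polynomial.map_one, Polynomial.eval_one] at hz
    exact one_ne_zero hz
  have hmon : QF.Monic := hQ.map _
  have heval : QF.eval z = (∑ i ∈ Finset.range n, QF.coeff i * z ^ i) + z ^ n := by
    rw [Polynomial.eval_eq_sum_range, hn, Finset.sum_range_succ]
    congr 1
    rw [← hn, QF.coeff_natDegree, hmon.leadingCoeff, one_mul]
  have hrest : v (∑ i ∈ Finset.range n, QF.coeff i * z ^ i) ≤ v z ^ (n - 1) := by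
    apply Valuation.map_sum_le
    intro i hi
    rw [Finset.mem_range] at hi
    rw [v.map_mul, v.map_pow]
    have hc : v (QF.coeff i) ≤ 1 := by
      rw [hQF, Polynomial.coeff_map]
      exact (Valuation.mem_valuationSubring_iff v _).mp (Q.coeff i).2
    calc v (QF.coeff i) * v z ^ i ≤ 1 * v z ^ i := mul_le_mul_left hc _
    _ = v z ^ i := one_mul _
    _ ≤ v z ^ (n - 1) := pow_le_pow_right' h.le (by omega)
  have hlt : v (∑ i ∈ Finset.range n, QF.coeff i * z ^ i) < v (z ^ n) := by
    rw [v.map_pow]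
    exact lt_of_le_of_lt hrest (pow_lt_pow_right₀ h (by omega))
  have : v (QF.eval z) = v (z ^ n) := by
    rw [heval, Valuation.map_add_of_distinct_val v (ne_of_lt hlt), sup_eq_right.mpr hlt.le]
  rw [hz, v.map_zero] at this
  have hz0 : v z ≠ 0 := by
    intro h0
    rw [h0] at h
    exact absurd h (not_lt.mpr zero_le')
  have hzn : v (z ^ n) = 0 := this.symm
  rw [v.map_pow] at hzn
  exact hz0 (pow_eq_zero_iff (Nat.one_le_iff_ne_zero.mp hn1) |>.mp hzn)

lemma eval_small_bound (v : Valuation F Γ₀) {h : Polynomial F}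
    (hc : ∀ i, v (h.coeff i) ≤ 1) (h0 : h.coeff 0 = 0) (h1 : h.coeff 1 = 0)
    {s : F} (hs : v s ≤ 1) : v (h.eval s) ≤ v s ^ 2 := by
  rw [Polynomial.eval_eq_sum_range]
  apply Valuation.map_sum_le
  intro i _
  match i with
  | 0 => rw [h0]; simp [zero_le']
  | 1 => rw [h1]; simp [zero_le']
  | (i + 2) =>
    rw [v.map_mul, v.map_pow]
    calc v (h.coeff (i+2)) * v s ^ (i + 2) ≤ 1 * v s ^ (i + 2) := mul_le_mul_left (hc _) _
    _ = v s ^ 2 * v s ^ i := by rw [one_mul, ← pow_add]; ring_nf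
    _ ≤ v s ^ 2 * 1 := mul_le_mul_right (pow_le_one' hs i) _
    _ = v s ^ 2 := mul_one _

section FTA
variable {F : Type} [Field F] [LinearOrder F] [IsStrictOrderedRing F]

open Polynomial IntermediateField

/-- Every element of `F(i)` is a square, where `i² = -1`. -/
lemma sq_in_adjoin (hF : IsRealClosedLOF F) {L : Type*} [Field L] [Algebra F L] {i : L}
    (hi : i ^ 2 = -1) : ∀ w ∈ IntermediateField.adjoin F {i},
      ∃ y ∈ IntermediateField.adjoin F {i}, y ^ 2 = w := by
  have hint : IsIntegral F i := by
    refine ⟨X ^ 2 + C 1, by monicity!, ?_⟩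
    simp [hi]
  intro w hw
  set φ := algebraMap F L with hφ
  -- representation w = φ a + φ b * i
  obtain ⟨a, b, hab⟩ : ∃ a b : F, w = φ a + φ b * i := by
    have h1 : w ∈ Algebra.adjoin F {i} := by
      rw [← IntermediateField.adjoin_simple_toSubalgebra_of_isAlgebraic hint.isAlgebraic]
      exact hw
    rw [Algebra.adjoin_singleton_eq_range_aeval] at h1
    obtain ⟨p, hp⟩ := h1
    have hmon : (X ^ 2 + C 1 : Polynomial F).Monic := by monicity!
    have hsplit : p %ₘ (X ^ 2 + C 1) + (X ^ 2 + C 1) * (p /ₘ (X ^ 2 + C 1)) = p :=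
      p.modByMonic_add_div _
    set r := p %ₘ (X ^ 2 + C 1) with hr
    have hdeg : r.degree ≤ 1 := by
      have hlt := p.degree_modByMonic_lt hmon
      have h2 : (X ^ 2 + C 1 : Polynomial F).degree = 2 := by
        compute_degree!
      rw [h2] at hlt
      exact Order.lt_succ_iff.mp (by exact_mod_cast hlt)
    have haev : Polynomial.aeval i p = Polynomial.aeval i r := by
      conv_lhs => rw [← hsplit]
      rw [map_add, map_mul]
      have : Polynomial.aeval i (X ^ 2 + C 1 : Polynomial F) = 0 := by simp [hi]
      rw [this, zero_mul, add_zero]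
    refine ⟨r.coeff 0, r.coeff 1, ?_⟩
    have hp' : Polynomial.aeval i p = w := hp
    rw [← hp', haev]
    conv_lhs => rw [Polynomial.eq_X_add_C_of_degree_le_one hdeg]
    simp only [map_add, map_mul, Polynomial.aeval_X, Polynomial.aeval_C]
    ring
  -- now find the square root
  obtain ⟨rr, hrr0, hrr2⟩ := rc_sqrt hF (show (0:F) ≤ a^2 + b^2 by positivity)
  have h1 : 0 ≤ (a + rr)/2 := by nlinarith [sq_nonneg b]
  obtain ⟨c, hc0, hc2⟩ := rc_sqrt hF h1
  have hiadj : i ∈ IntermediateField.adjoin F {i} :=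
    IntermediateField.subset_adjoin F {i} rfl
  rcases eq_or_ne c 0 with hcz | hcz
  · -- then a = -rr and b = 0, w = φ a ≤ 0
    have har : a = -rr := by
      rw [hcz] at hc2
      simp at hc2
      linarith
    have hb : b = 0 := by nlinarith
    obtain ⟨d, _, hd2⟩ := rc_sqrt hF hrr0
    refine ⟨φ d * i, mul_mem (IntermediateField.algebraMap_mem _ d) hiadj, ?_⟩
    rw [mul_pow, hi, ← map_pow, hd2, hab, hb, har]
    simp
  · set d := b / (2 * c) with hd
    have h2cd : 2 * c * d = b := by
      rw [hd]; field_simp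
    have key : 4*c^2*c^2 - b^2 - 4*a*c^2 = 0 := by
      rw [hc2]
      linear_combination hrr2
    have hcd : c ^ 2 - d ^ 2 = a := by
      rw [hd]
      field_simp
      linear_combination key
    refine ⟨φ c + φ d * i,
      add_mem (IntermediateField.algebraMap_mem _ c)
        (mul_mem (IntermediateField.algebraMap_mem _ d) hiadj), ?_⟩
    have hy2 : (φ c + φ d * i) ^ 2 = (φ c ^ 2 - φ d ^ 2) + (2 * φ c * φ d) * i := by
      have hh : (φ c + φ d * i) ^ 2 = φ c ^2 + 2 * φ c * φ d * i + φ d ^2 * i^2 := by ring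
      rw [hh, hi]; ring
    rw [hy2, ← map_pow, ← map_pow, ← map_sub,
      show (2:L) = φ 2 from (map_ofNat φ 2).symm, ← map_mul, ← map_mul, hcd, h2cd, hab]

/-- A field in which every element is a square and `2 ≠ 0` has no elements of
minimal-polynomial-degree 2 in any extension. -/
lemma no_deg_two_ext {K : Type*} [Field K] (hsq : ∀ w : K, ∃ y : K, y ^ 2 = w)
    (h2K : (2 : K) ≠ 0) {M : Type*} [Field M] [Algebra K M] (β : M)
    (hint : IsIntegral K β) (hdeg : (minpoly K β).natDegree = 2) : False := by
  set m := minpoly K β with hm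
  have hmon : m.Monic := minpoly.monic hint
  set p := m.coeff 1 with hp
  set q := m.coeff 0 with hq
  have heval : ∀ r : K, m.eval r = r ^ 2 + p * r + q := by
    intro r
    rw [Polynomial.eval_eq_sum_range, hdeg]
    have hc2 : m.coeff 2 = 1 := by
      have := hmon.leadingCoeff
      rwa [Polynomial.leadingCoeff, hdeg] at this
    simp [Finset.sum_range_succ, hc2]
    ring
  obtain ⟨s, hs⟩ := hsq (p ^ 2 - 4 * q)
  have h4 : (4 : K) ≠ 0 := by
    intro h
    apply h2K
    have : (2:K) * 2 = 4 := by norm_num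
    rcases mul_eq_zero.mp (this.trans h) with h' | h' <;> exact h'
  set r := (-p + s) / 2 with hr
  have hroot : m.eval r = 0 := by
    rw [heval, hr]
    field_simp
    linear_combination hs
  -- m irreducible with a root, degree 2 : contradiction
  have hirr : Irreducible m := minpoly.irreducible hint
  obtain ⟨t, ht⟩ := (Polynomial.dvd_iff_isRoot.mpr hroot : X - C r ∣ m)
  rcases hirr.isUnit_or_isUnit ht with hu | hu
  · exact Polynomial.not_isUnit_of_natDegree_pos _ (by simp [Polynomial.natDegree_X_sub_C]) hu
  · have ht0 : t ≠ 0 := by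
      rintro rfl
      rw [mul_zero] at ht
      exact hmon.ne_zero ht
    have : m.natDegree = 1 := by
      rw [ht, Polynomial.natDegree_mul (Polynomial.X_sub_C_ne_zero r) ht0,
        Polynomial.natDegree_X_sub_C, Polynomial.natDegree_eq_zero_of_isUnit hu]
    omega



open Polynomial IntermediateField Module in
lemma natDegree_eq_one_of_root {K : Type*} [Field K] {m : Polynomial K} (hirr : Irreducible m)
    {x : K} (hx : m.eval x = 0) : m.natDegree = 1 := by
  obtain ⟨t, ht⟩ := (Polynomial.dvd_iff_isRoot.mpr hx : X - C x ∣ m)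
  rcases hirr.isUnit_or_isUnit ht with hu | hu
  · exact absurd hu
      (Polynomial.not_isUnit_of_natDegree_pos _ (by simp [Polynomial.natDegree_X_sub_C]))
  · have ht0 : t ≠ 0 := by rintro rfl; rw [mul_zero] at ht; exact hirr.ne_zero ht
    rw [ht, Polynomial.natDegree_mul (Polynomial.X_sub_C_ne_zero x) ht0,
      Polynomial.natDegree_X_sub_C, Polynomial.natDegree_eq_zero_of_isUnit hu]

open Polynomial IntermediateField Module in
lemma odd_finrank_eq_one (hF : IsRealClosedLOF F) {E : Type*} [Field E] [Algebra F E]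
    [FiniteDimensional F E] (hodd : Odd (Module.finrank F E)) : Module.finrank F E = 1 := by
  obtain ⟨α, hα⟩ := Field.exists_primitive_element F E
  have hint : IsIntegral F α := IsIntegral.of_finite F α
  have h1 : finrank F F⟮α⟯ = (minpoly F α).natDegree := IntermediateField.adjoin.finrank hint
  have h2 : finrank F F⟮α⟯ = finrank F E := by
    rw [hα]
    exact (IntermediateField.topEquiv (F := F) (E := E)).toLinearEquiv.finrank_eq
  obtain ⟨x, hx⟩ := hF.2 (minpoly F α) (by rw [← h1, h2]; exact hodd)
  have h3 := natDegree_eq_one_of_root (minpoly.irreducible hint) hx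
  rw [← h2, h1, h3]

set_option maxHeartbeats 1000000 in
set_option synthInstance.maxHeartbeats 400000 in
open Polynomial IntermediateField Module in
lemma galois_finrank_le_two (hF : IsRealClosedLOF F) {L : Type*} [Field L] [Algebra F L]
    [FiniteDimensional F L] [IsGalois F L] {i : L} (hi : i ^ 2 = -1) :
    Module.finrank F L ≤ 2 := by
  classical
  haveI : Fact (Nat.Prime 2) := ⟨Nat.prime_two⟩
  obtain ⟨P⟩ := Sylow.nonempty (p := 2) (G := L ≃ₐ[F] L)
  set E := IntermediateField.fixedField (P : Subgroup (L ≃ₐ[F] L)) with hE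
  have h1 : finrank E L = Nat.card (P : Subgroup (L ≃ₐ[F] L)) := by
    rw [IntermediateField.finrank_fixedField_eq_card, Nat.card_eq_fintype_card]
  have h2 : finrank F E * finrank E L = finrank F L := finrank_mul_finrank F E L
  have h3 : Nat.card (L ≃ₐ[F] L) = finrank F L := by
    rw [IsGalois.card_aut_eq_finrank F L]
  have h4 : (P : Subgroup (L ≃ₐ[F] L)).index * Nat.card (P : Subgroup (L ≃ₐ[F] L))
      = Nat.card (L ≃ₐ[F] L) := Subgroup.index_mul_card _
  have hcardP : 0 < Nat.card (P : Subgroup (L ≃ₐ[F] L)) := Nat.card_pos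
  have h5 : finrank F E = (P : Subgroup (L ≃ₐ[F] L)).index := by
    apply Nat.eq_of_mul_eq_mul_right hcardP
    rw [← h1, h2, ← h3, ← h4, h1]
  have hoddE : Odd (finrank F E) := by
    rw [h5, Nat.odd_iff]
    have hnd := Sylow.not_dvd_index P
    omega
  have hE1 : finrank F E = 1 := odd_finrank_eq_one hF hoddE
  obtain ⟨k, hk⟩ : ∃ k, finrank F L = 2 ^ k := by
    obtain ⟨k, hk⟩ := (IsPGroup.iff_card).mp P.2
    exact ⟨k, by rw [← h3, ← h4, ← h5, hE1, one_mul, hk]⟩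
  set Li := IntermediateField.adjoin F {i} with hLi
  have htopfr : finrank F (⊤ : IntermediateField F L) = finrank F L :=
    (IntermediateField.topEquiv (F := F) (E := L)).toLinearEquiv.finrank_eq
  have hitop : Li = ⊤ := by
    by_contra hne
    haveI : IsGalois Li L := IsGalois.tower_top_intermediateField Li
    have htower : finrank F Li * finrank Li L = finrank F L := finrank_mul_finrank F Li L
    have hdvd : finrank Li L ∣ 2 ^ k := by
      rw [← hk, ← htower]; exact Dvd.intro_left _ rfl
    obtain ⟨m, hmk, hm⟩ := (Nat.dvd_prime_pow Nat.prime_two).mp hdvd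
    have hm1 : finrank Li L ≠ 1 := by
      intro h1'
      apply hne
      apply IntermediateField.eq_of_le_of_finrank_eq le_top
      rw [htopfr, ← htower, h1', mul_one]
    have hmge : 1 ≤ m := by
      rcases Nat.eq_zero_or_pos m with h0 | h0
      · rw [h0, pow_zero] at hm; exact absurd hm hm1
      · exact h0
    have hcard2 : Nat.card (L ≃ₐ[Li] L) = 2 ^ m := by
      rw [IsGalois.card_aut_eq_finrank Li L, ← hm]
    obtain ⟨H, hH⟩ := Sylow.exists_subgroup_card_pow_prime 2 (n := m - 1)
      (by rw [hcard2]; exact pow_dvd_pow 2 (by omega))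
    set E2 := IntermediateField.fixedField H with hE2
    have hf1 : finrank E2 L = 2 ^ (m - 1) := by
      rw [IntermediateField.finrank_fixedField_eq_card, hH]
    have hf2 : finrank Li E2 * finrank E2 L = finrank Li L := finrank_mul_finrank Li E2 L
    have hf3 : finrank Li E2 = 2 := by
      have h2m : (2:ℕ) ^ m = 2 * 2 ^ (m - 1) := by
        rw [← pow_succ']
        congr 1
        omega
      rw [hf1, hm, h2m] at hf2
      exact Nat.eq_of_mul_eq_mul_right (by positivity) hf2
    obtain ⟨β, hβ⟩ : ∃ β : E2, β ∉ (algebraMap Li E2).range := by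
      by_contra hall
      push_neg at hall
      have hsurj : Function.Surjective (algebraMap Li E2) := fun b => by
        have := hall b
        simpa using this
      have heq := (LinearEquiv.ofBijective (Algebra.linearMap Li E2)
        ⟨fun a b hab => (algebraMap Li E2).injective hab, hsurj⟩).finrank_eq
      rw [Module.finrank_self, hf3] at heq
      omega
    have hβint : IsIntegral Li β := IsIntegral.of_finite Li β
    have hd : (minpoly Li β).natDegree = 2 := by
      set A : IntermediateField (↥Li) (↥E2) := IntermediateField.adjoin (↥Li) {β} with hA
      have ha1 : finrank (↥Li) (↥A) = (minpoly (↥Li) β).natDegree :=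
        IntermediateField.adjoin.finrank hβint
      have ha2 : finrank (↥Li) (↥A) * finrank (↥A) (↥E2) = finrank (↥Li) (↥E2) :=
        finrank_mul_finrank (↥Li) (↥A) (↥E2)
      have hne1 : (minpoly Li β).natDegree ≠ 1 := fun h =>
        hβ ((minpoly.natDegree_eq_one_iff).mp h)
      have hpos : 0 < (minpoly Li β).natDegree := minpoly.natDegree_pos hβint
      have hdvd2 : (minpoly Li β).natDegree ∣ 2 := by
        rw [← ha1, ← hf3, ← ha2]; exact Dvd.intro _ rfl
      have hle := Nat.le_of_dvd (by norm_num) hdvd2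
      omega
    have hsqLi : ∀ w : Li, ∃ y : Li, y ^ 2 = w := by
      intro w
      obtain ⟨y, hy, hy2⟩ := sq_in_adjoin hF hi w.1 w.2
      refine ⟨⟨y, hy⟩, ?_⟩
      ext
      push_cast
      exact hy2
    have h2Li : (2 : Li) ≠ 0 := by
      haveI : CharZero Li := charZero_of_injective_algebraMap (algebraMap F Li).injective
      exact two_ne_zero
    exact no_deg_two_ext hsqLi h2Li β hβint hd
  have hiint : IsIntegral F i := by
    refine ⟨X ^ 2 + C 1, by monicity!, ?_⟩
    simp [hi]
  have hX1 : (X ^ 2 + C (1:F)) ≠ 0 := Polynomial.Monic.ne_zero (by monicity!)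
  have h6 : finrank F Li = (minpoly F i).natDegree := IntermediateField.adjoin.finrank hiint
  have h7 : (minpoly F i).natDegree ≤ (X ^ 2 + C (1:F)).natDegree :=
    Polynomial.natDegree_le_of_dvd (minpoly.dvd F i (by simp [hi])) hX1
  have h8 : (X ^ 2 + C (1:F)).natDegree = 2 := by
    apply Polynomial.natDegree_eq_of_degree_eq_some
    compute_degree!
  rw [← htopfr, ← hitop, h6]
  omega

open Polynomial Module in
lemma rc_irreducible_natDegree_le_two (hF : IsRealClosedLOF F) {q : Polynomial F}
    (hq : Irreducible q) : q.natDegree ≤ 2 := by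
  classical
  have hq0 : q ≠ 0 := hq.ne_zero
  have hX1m : (X ^ 2 + C (1:F)).Monic := by monicity!
  have hX1 : (X ^ 2 + C (1:F)) ≠ 0 := hX1m.ne_zero
  set Qp := q * (X ^ 2 + C 1) with hQp
  have hQp0 : Qp ≠ 0 := mul_ne_zero hq0 hX1
  haveI : IsGalois F Qp.SplittingField := ⟨⟩
  have hsplX : ((X ^ 2 + C (1:F)).map (algebraMap F Qp.SplittingField)).Splits :=
    Polynomial.Splits.of_dvd (Polynomial.SplittingField.splits Qp) (Polynomial.map_ne_zero hQp0)
      (Polynomial.map_dvd _ (dvd_mul_left _ q))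
  have hdeg2 : (X ^ 2 + C (1:F)).degree = 2 := by compute_degree!
  obtain ⟨i, hi'⟩ := Polynomial.Splits.exists_eval_eq_zero hsplX
    (by rw [Polynomial.degree_map, hdeg2]; norm_num)
  have hi : i ^ 2 = -1 := by
    simp only [Polynomial.eval_map, Polynomial.eval₂_add, Polynomial.eval₂_pow, Polynomial.eval₂_X,
      Polynomial.eval₂_one, Polynomial.eval₂_C, map_one] at hi'
    linear_combination hi'
  have hfr : finrank F Qp.SplittingField ≤ 2 := galois_finrank_le_two hF hi
  have hqd : 0 < q.natDegree := hq.natDegree_pos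
  obtain ⟨z, hz⟩ := Polynomial.Splits.exists_eval_eq_zero
    (Polynomial.Splits.of_dvd (Polynomial.SplittingField.splits Qp) (Polynomial.map_ne_zero hQp0)
      (Polynomial.map_dvd _ (dvd_mul_right q _)))
    (by rw [Polynomial.degree_map, Polynomial.degree_eq_natDegree hq0]; exact_mod_cast (by omega : q.natDegree ≠ 0))
  have hzaev : Polynomial.aeval z q = 0 := by rw [Polynomial.aeval_def, ← Polynomial.eval_map]; exact hz
  obtain ⟨t, ht⟩ := minpoly.dvd F z hzaev
  have hzint : IsIntegral F z := IsIntegral.of_finite F z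
  have hminpos : 0 < (minpoly F z).natDegree := minpoly.natDegree_pos hzint
  rcases hq.isUnit_or_isUnit ht with hu | hu
  · exact absurd hu (Polynomial.not_isUnit_of_natDegree_pos _ hminpos)
  · have ht0 : t ≠ 0 := by rintro rfl; rw [mul_zero] at ht; exact hq0 ht
    have hdq : q.natDegree = (minpoly F z).natDegree := by
      rw [ht, Polynomial.natDegree_mul (minpoly.ne_zero hzint) ht0,
        Polynomial.natDegree_eq_zero_of_isUnit hu, add_zero]
    rw [hdq]
    exact le_trans (minpoly.natDegree_le z) hfr

lemma pos_mul_neg_aux {a b : F} (ha : 0 < a) (hab : a * b < 0) : b < 0 := by nlinarith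

open Polynomial in
lemma rc_ivt (hF : IsRealClosedLOF F) :
    ∀ f : Polynomial F, ∀ a b : F, a ≤ b → f.eval a * f.eval b < 0 →
      ∃ x, a ≤ x ∧ x ≤ b ∧ f.eval x = 0 := by
  classical
  suffices H : ∀ n : ℕ, ∀ f : Polynomial F, f.natDegree ≤ n → ∀ a b : F, a ≤ b →
      f.eval a * f.eval b < 0 → ∃ x, a ≤ x ∧ x ≤ b ∧ f.eval x = 0 by
    intro f a b hab h
    exact H f.natDegree f le_rfl a b hab h
  intro n
  induction n with
  | zero =>
    intro f hf a b _ h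
    exfalso
    obtain ⟨c, hc⟩ := Polynomial.natDegree_eq_zero.mp (Nat.le_zero.mp hf)
    rw [← hc] at h
    simp only [Polynomial.eval_C] at h
    nlinarith
  | succ n ih =>
    intro f hf a b hab h
    have hf0 : f ≠ 0 := by rintro rfl; simp at h
    by_cases hroot : ∃ r : F, f.eval r = 0
    · obtain ⟨r, hr⟩ := hroot
      by_cases hin : a ≤ r ∧ r ≤ b
      · exact ⟨r, hin.1, hin.2, hr⟩
      · obtain ⟨g, hg⟩ := (Polynomial.dvd_iff_isRoot.mpr hr : X - C r ∣ f)
        have hg0 : g ≠ 0 := by rintro rfl; rw [mul_zero] at hg; exact hf0 hg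
        have hgd : g.natDegree ≤ n := by
          have := Polynomial.natDegree_mul (Polynomial.X_sub_C_ne_zero r) hg0
          rw [← hg, Polynomial.natDegree_X_sub_C] at this
          omega
        have hprod : 0 < (a - r) * (b - r) := by
          rcases not_and_or.mp hin with hlt | hlt
          · push_neg at hlt
            exact mul_pos (by linarith) (by linarith)
          · push_neg at hlt
            exact mul_pos_of_neg_of_neg (by linarith) (by linarith)
        have hfa : f.eval a = (a - r) * g.eval a := by
          rw [hg, Polynomial.eval_mul, Polynomial.eval_sub, Polynomial.eval_X, Polynomial.eval_C]
        have hfb : f.eval b = (b - r) * g.eval b := by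
          rw [hg, Polynomial.eval_mul, Polynomial.eval_sub, Polynomial.eval_X, Polynomial.eval_C]
        have hgab : g.eval a * g.eval b < 0 := by
          apply pos_mul_neg_aux hprod
          have heq : (a - r) * (b - r) * (g.eval a * g.eval b) = f.eval a * f.eval b := by
            rw [hfa, hfb]; ring
          rw [heq]; exact h
        obtain ⟨x, hx1, hx2, hx3⟩ := ih g hgd a b hab hgab
        exact ⟨x, hx1, hx2, by rw [hg]; simp [hx3]⟩
    · -- no root at all : find a positive-definite quadratic factor
      push_neg at hroot
      have hfd : 0 < f.natDegree := by
        rcases Nat.eq_zero_or_pos f.natDegree with h0 | h0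
        · exfalso
          obtain ⟨c, hc⟩ := Polynomial.natDegree_eq_zero.mp h0
          rw [← hc] at h
          simp only [Polynomial.eval_C] at h
          nlinarith
        · exact h0
      obtain ⟨g, hgirr, hgdvd⟩ := WfDvdMonoid.exists_irreducible_factor
        (Polynomial.not_isUnit_of_natDegree_pos f hfd) hf0
      obtain ⟨t, ht⟩ := hgdvd
      have hg2 : g.natDegree ≤ 2 := rc_irreducible_natDegree_le_two hF hgirr
      have hgpos : 0 < g.natDegree := hgirr.natDegree_pos
      have hgnoroot : ∀ x : F, g.eval x ≠ 0 := by
        intro x hx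
        apply hroot x
        rw [ht, Polynomial.eval_mul, hx, zero_mul]
      have hgd2 : g.natDegree = 2 := by
        rcases Nat.lt_or_ge g.natDegree 2 with hlt | hge
        · exfalso
          have h1 : g.natDegree = 1 := by omega
          apply hgnoroot (-(g.coeff 0) / g.coeff 1)
          have hgne : g.coeff 1 ≠ 0 := by
            intro hc
            have := Polynomial.eq_X_add_C_of_natDegree_le_one h1.le
            rw [hc, map_zero, zero_mul, zero_add] at this
            rw [this] at h1
            simp at h1
          conv_lhs => rw [Polynomial.eq_X_add_C_of_natDegree_le_one h1.le]
          simp only [Polynomial.eval_add, Polynomial.eval_mul, Polynomial.eval_C,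
            Polynomial.eval_X]
          field_simp
          simp
          rw [mul_div_cancel_left₀ _ hgne]
          ring
        · omega
      -- g = c2 X² + c1 X + c0 with negative discriminant : constant sign
      set c2 := g.coeff 2 with hc2
      set c1 := g.coeff 1 with hc1
      set c0 := g.coeff 0 with hc0
      have hc2ne : c2 ≠ 0 := by
        rw [hc2, ← hgd2]
        exact Polynomial.leadingCoeff_ne_zero.mpr hgirr.ne_zero
      have hgeval : ∀ x : F, g.eval x = c2 * x ^ 2 + c1 * x + c0 := by
        intro x
        rw [Polynomial.eval_eq_sum_range, hgd2]
        simp [Finset.sum_range_succ]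
        ring
      have hdisc : c1 ^ 2 - 4 * (c2 * c0) < 0 := by
        by_contra hd
        push_neg at hd
        obtain ⟨s, hs0, hs2⟩ := rc_sqrt hF hd
        apply hgnoroot ((-c1 + s) / (2 * c2))
        rw [hgeval]
        field_simp
        linear_combination hs2
      have hsign : ∀ x y : F, 0 < g.eval x * g.eval y := by
        intro x y
        have e1 : c2 * g.eval x = (c2 * x + c1 / 2) ^ 2 + (c2 * c0 - c1 ^ 2 / 4) := by
          rw [hgeval]; ring
        have e2 : c2 * g.eval y = (c2 * y + c1 / 2) ^ 2 + (c2 * c0 - c1 ^ 2 / 4) := by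
          rw [hgeval]; ring
        have hq4 : 0 < c2 * c0 - c1 ^ 2 / 4 := by linarith
        have hpos1 : 0 < c2 * g.eval x := by
          rw [e1]; linarith [sq_nonneg (c2 * x + c1 / 2)]
        have hpos2 : 0 < c2 * g.eval y := by
          rw [e2]; linarith [sq_nonneg (c2 * y + c1 / 2)]
        have hc2sq : 0 < c2 ^ 2 := by positivity
        have h3 : 0 < c2 ^ 2 * (g.eval x * g.eval y) := by
          calc (0:F) < (c2 * g.eval x) * (c2 * g.eval y) := mul_pos hpos1 hpos2
          _ = c2 ^ 2 * (g.eval x * g.eval y) := by ring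
        nlinarith [h3, hc2sq]
      have ht0 : t ≠ 0 := by rintro rfl; rw [mul_zero] at ht; exact hf0 ht
      have htd : t.natDegree ≤ n := by
        have := Polynomial.natDegree_mul hgirr.ne_zero ht0
        rw [← ht] at this
        omega
      have htab : t.eval a * t.eval b < 0 := by
        apply pos_mul_neg_aux (hsign a b)
        have hfa : f.eval a = g.eval a * t.eval a := by rw [ht, Polynomial.eval_mul]
        have hfb : f.eval b = g.eval b * t.eval b := by rw [ht, Polynomial.eval_mul]
        have heq : g.eval a * g.eval b * (t.eval a * t.eval b) = f.eval a * f.eval b := by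
          rw [hfa, hfb]; ring
        rw [heq]; exact h
      obtain ⟨x, hx1, hx2, hx3⟩ := ih t htd a b hab htab
      exact ⟨x, hx1, hx2, by rw [ht]; simp [hx3]⟩

set_option maxHeartbeats 1000000 in
open Polynomial in
lemma rc_hensel {Γ₀ : Type} [LinearOrderedCommGroupWithZero Γ₀] (hF : IsRealClosedLOF F)
    (v : Valuation F Γ₀)
    (hconv : ∀ x y : F, 0 ≤ x → x ≤ y → v y ≤ 1 → v x ≤ 1) :
    HenselianLocalRing v.valuationSubring := by
  constructor
  intro f hf a₀ hfa₀ hfd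
  set φ : v.valuationSubring →+* F := algebraMap v.valuationSubring F with hφ
  set fF := f.map φ with hfF
  set aF : F := (a₀ : F) with haF
  have hφa : φ a₀ = aF := rfl
  set c : F := fF.eval aF with hc
  set u : F := (Polynomial.derivative fF).eval aF with hu
  have hcv : c = ((f.eval a₀ : v.valuationSubring) : F) := by
    rw [hc, hfF, ← hφa, Polynomial.eval_map, Polynomial.eval₂_at_apply]
    rfl
  have hc1 : v c < 1 := by
    rw [hcv]
    exact (val_mem_maximalIdeal v _).mp hfa₀
  have hu1 : v u = 1 := by
    have h2 : u = (((Polynomial.derivative f).eval a₀ : v.valuationSubring) : F) := by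
      rw [hu, hfF, Polynomial.derivative_map, ← hφa, Polynomial.eval_map,
        Polynomial.eval₂_at_apply]
      rfl
    rw [h2]
    exact (val_isUnit v _).mp hfd
  by_cases hc0 : c = 0
  · refine ⟨a₀, ?_, ?_⟩
    · have : ((f.eval a₀ : v.valuationSubring) : F) = 0 := by rw [← hcv, hc0]
      exact Subtype.coe_injective this
    · rw [sub_self]
      exact Ideal.zero_mem _
  -- the Newton step scale s
  obtain ⟨s, hs0, hs2⟩ := rc_nthRoot hF 2 (by norm_num) |c| (abs_nonneg c)
  have hs_ne : s ≠ 0 := by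
    intro h
    rw [h] at hs2
    simp at hs2
    exact hc0 (abs_eq_zero.mp hs2.symm)
  have hs_pos : 0 < s := lt_of_le_of_ne hs0 (Ne.symm hs_ne)
  have hvs2 : v s * v s = v c := by rw [← v.map_mul, ← sq, hs2, val_abs]
  have hvs1 : v s < 1 := by
    by_contra hge
    push_neg at hge
    have h1 : (1:Γ₀) ≤ v s * v s := by
      calc (1:Γ₀) = 1 * 1 := (one_mul 1).symm
      _ ≤ v s * v s := mul_le_mul' hge hge
    rw [hvs2] at h1
    exact absurd hc1 (not_lt.mpr h1)
  have hvs0 : v s ≠ 0 := by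
    intro h
    exact hs_ne ((Valuation.zero_iff v).mp h)
  -- the shifted polynomial g
  set gO : Polynomial v.valuationSubring := f.comp (X + C a₀) with hgO
  set g : Polynomial F := gO.map φ with hg
  have hgcomp : g = fF.comp (X + C aF) := by
    rw [hg, hgO, Polynomial.map_comp, hfF]
    congr 1
    simp only [Polynomial.map_add, Polynomial.map_X, Polynomial.map_C, hφa]
  have hgeval : ∀ t : F, g.eval t = fF.eval (t + aF) := by
    intro t
    rw [hgcomp, Polynomial.eval_comp]
    simp
  have hgc : ∀ k, v (g.coeff k) ≤ 1 := by
    intro k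
    rw [hg, Polynomial.coeff_map]
    exact (Valuation.mem_valuationSubring_iff v _).mp (gO.coeff k).2
  have hg0 : g.coeff 0 = c := by
    rw [Polynomial.coeff_zero_eq_eval_zero, hgeval, zero_add]
  have hgder : Polynomial.derivative g = (Polynomial.derivative fF).comp (X + C aF) := by
    rw [hgcomp, Polynomial.derivative_comp]
    simp
  have hg1 : g.coeff 1 = u := by
    have h1 := Polynomial.coeff_derivative g 0
    rw [Polynomial.coeff_zero_eq_eval_zero, hgder, Polynomial.eval_comp] at h1
    simp at h1
    rw [hu, ← h1]
  set hh : Polynomial F := g - C c - C u * X with hhh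
  have hh0 : hh.coeff 0 = 0 := by
    simp [hhh, hg0]
  have hh1 : hh.coeff 1 = 0 := by
    simp [hhh, hg1]
  have hhc : ∀ i, v (hh.coeff i) ≤ 1 := by
    intro i
    simp only [hhh, Polynomial.coeff_sub]
    refine le_trans (v.map_sub _ _) (max_le (le_trans (v.map_sub _ _) (max_le (hgc i) ?_)) ?_)
    · rcases eq_or_ne i 0 with h | h
      · simp [h, Polynomial.coeff_C, hc1.le]
      · simp [Polynomial.coeff_C, h, zero_le']
    · rcases eq_or_ne i 1 with h | h
      · simp [h, hu1.le]
      · rw [Polynomial.coeff_C_mul, Polynomial.coeff_X, if_neg (Ne.symm h), mul_zero,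
          v.map_zero]
        exact zero_le'
  have hheval : ∀ t : F, hh.eval t = g.eval t - c - u * t := by
    intro t
    simp [hhh]
  -- sign comparison
  have hkey : ∀ t : F, v t = v s → v (g.eval t - u * t) < v (u * t) := by
    intro t ht
    have h1 : g.eval t - u * t = c + hh.eval t := by
      rw [hheval t]; ring
    have h2 : v (hh.eval t) ≤ v s * v s := by
      have h3 := eval_small_bound v hhc hh0 hh1 (s := t) (by rw [ht]; exact hvs1.le)
      rw [ht] at h3
      calc v (hh.eval t) ≤ v s ^ 2 := h3
      _ = v s * v s := sq (v s)
    have h3 : v (c + hh.eval t) ≤ v s * v s :=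
      le_trans (v.map_add _ _) (max_le (le_of_eq hvs2.symm) h2)
    have h4 : v (u * t) = v s := by rw [v.map_mul, hu1, one_mul, ht]
    rw [h1, h4]
    refine lt_of_le_of_lt h3 ?_
    have hle : v s * v s ≤ 1 * v s := mul_le_mul_left hvs1.le _
    rw [one_mul] at hle
    refine lt_of_le_of_ne hle ?_
    intro heqq
    have h5 : v s = 1 := mul_right_cancel₀ hvs0 (heqq.trans (one_mul (v s)).symm)
    exact absurd h5 (ne_of_lt hvs1)
  have hu0 : u ≠ 0 := by
    intro h
    rw [h, v.map_zero] at hu1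
    exact zero_ne_one hu1
  have hsgn : g.eval (-s) * g.eval s < 0 := by
    have h1 := hkey s rfl
    have h2 := hkey (-s) (v.map_neg s)
    rcases lt_trichotomy (u * s) 0 with hneg | hzero | hpos
    · have hgs : g.eval s < 0 := val_sign_neg v hconv h1 hneg
      have hgn : 0 < g.eval (-s) := val_sign_pos v hconv h2 (by nlinarith)
      nlinarith
    · exact absurd hzero (mul_ne_zero hu0 hs_ne)
    · have hgs : 0 < g.eval s := val_sign_pos v hconv h1 hpos
      have hgn : g.eval (-s) < 0 := val_sign_neg v hconv h2 (by nlinarith)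
      nlinarith
  obtain ⟨t, ht1, ht2, ht3⟩ := rc_ivt hF g (-s) s (by linarith) hsgn
  have hvt : v t < 1 := by
    have habs : |t| ≤ s := abs_le.mpr ⟨ht1, ht2⟩
    have := val_mono v hconv (abs_nonneg t) habs
    rw [val_abs] at this
    exact lt_of_le_of_lt this hvs1
  set tO : v.valuationSubring := ⟨t, (Valuation.mem_valuationSubring_iff v t).mpr hvt.le⟩
    with htO
  refine ⟨a₀ + tO, ?_, ?_⟩
  · have h3 : φ (a₀ + tO) = t + aF := by
      rw [map_add, hφa, show φ tO = t from rfl]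
      ring
    have h1 : ((f.eval (a₀ + tO) : v.valuationSubring) : F) = 0 := by
      have h2 : φ (f.eval (a₀ + tO)) = fF.eval (φ (a₀ + tO)) := by
        rw [hfF, Polynomial.eval_map, Polynomial.eval₂_at_apply]
      calc ((f.eval (a₀ + tO) : v.valuationSubring) : F) = φ (f.eval (a₀ + tO)) := rfl
      _ = fF.eval (φ (a₀ + tO)) := h2
      _ = fF.eval (t + aF) := by rw [h3]
      _ = 0 := by rw [← hgeval, ht3]
    exact Subtype.coe_injective h1
  · have : a₀ + tO - a₀ = tO := by ring
    rw [this]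
    exact (val_mem_maximalIdeal v tO).mpr hvt


end FTA
end Aux

set_option maxHeartbeats 1000000 in
open Polynomial in
/-- let `F` be a real closed field with its (unique) ordering and `v` a
non-trivial convex valuation on `F`.  Then the residue field with the induced ordering is
real closed, the value group is divisible, and `(F, v)` is henselian. -/
theorem real_closed_convex_valuation_conclusions
    (F : Type) [Field F] [LinearOrder F] [IsStrictOrderedRing F] (hF : IsRealClosedLOF F)
    (Γ₀ : Type) [LinearOrderedCommGroupWithZero Γ₀]
    (v : Valuation F Γ₀)
    (hnontriv : ∃ x : F, x ≠ 0 ∧ v x ≠ 1)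
    (hconv : ∀ x y : F, 0 ≤ x → x ≤ y → v y ≤ 1 → v x ≤ 1) :
    IsRealClosedCone (IsLocalRing.ResidueField v.valuationSubring) (residueCone F v) ∧
      (∀ x : F, x ≠ 0 → ∀ n : ℕ, 0 < n → ∃ y : F, y ≠ 0 ∧ (v y) ^ n = v x) ∧
      HenselianLocalRing v.valuationSubring := by

  classical
  have hsurj : Function.Surjective (IsLocalRing.residue v.valuationSubring) :=
    IsLocalRing.residue_surjective
  refine ⟨⟨⟨?_, ?_, ?_, ?_, ?_⟩, ?_, ?_⟩, ?_, ?_⟩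
  · rintro x ⟨a, ha0, rfl⟩ y ⟨b, hb0, rfl⟩
    exact ⟨a + b, by push_cast; exact add_nonneg ha0 hb0, by rw [map_add]⟩
  · rintro x ⟨a, ha0, rfl⟩ y ⟨b, hb0, rfl⟩
    exact ⟨a * b, by push_cast; exact mul_nonneg ha0 hb0, by rw [map_mul]⟩
  · intro x
    obtain ⟨a, rfl⟩ := hsurj x
    exact ⟨a ^ 2, by push_cast; positivity, by rw [map_pow]⟩
  · rintro ⟨a, ha0, ha⟩
    have h1 : IsLocalRing.residue v.valuationSubring (a + 1) = 0 := by
      rw [map_add, ha, map_one]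
      ring
    have h2 : a + 1 ∈ IsLocalRing.maximalIdeal v.valuationSubring :=
      Ideal.Quotient.eq_zero_iff_mem.mp h1
    have h3 : v ((a : F) + 1) < 1 := by
      have h4 := (val_mem_maximalIdeal v (a + 1)).mp h2
      have h5 : ((a + 1 : v.valuationSubring) : F) = (a : F) + 1 := by push_cast; ring
      rwa [h5] at h4
    have h4 : v (1 : F) ≤ v ((a : F) + 1) :=
      val_mono v hconv zero_le_one (by linarith)
    rw [v.map_one] at h4
    exact absurd h3 (not_lt.mpr h4)
  · intro x
    obtain ⟨a, rfl⟩ := hsurj x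
    rcases le_or_gt 0 (a : F) with h | h
    · exact Or.inl ⟨a, h, rfl⟩
    · exact Or.inr ⟨-a, by push_cast; linarith, by rw [map_neg]⟩
  · -- square roots in the residue field
    rintro x ⟨a, ha0, rfl⟩
    obtain ⟨y, hy0, hy2⟩ := rc_sqrt hF ha0
    have hyv : v y ≤ 1 := by
      by_contra hgt
      push_neg at hgt
      have h5 : v ((a : F)) = v y * v y := by rw [← v.map_mul, ← sq, hy2]
      have h6 : (1 : Γ₀) < v y * v y := by
        calc (1:Γ₀) < v y := hgt
        _ = v y * 1 := (mul_one _).symm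
        _ ≤ v y * v y := mul_le_mul_right hgt.le _
      have ha1 : v ((a : F)) ≤ 1 := (Valuation.mem_valuationSubring_iff v _).mp a.2
      rw [h5] at ha1
      exact absurd (lt_of_lt_of_le h6 ha1) (lt_irrefl 1)
    refine ⟨IsLocalRing.residue _ ⟨y, (Valuation.mem_valuationSubring_iff v y).mpr hyv⟩, ?_⟩
    rw [← map_pow]
    congr 1
    ext
    push_cast
    exact hy2
  · -- odd degree polynomials over the residue field
    intro p hodd
    set k := IsLocalRing.ResidueField v.valuationSubring with hk
    set ρ := IsLocalRing.residue v.valuationSubring with hρ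
    set φ : v.valuationSubring →+* F := algebraMap v.valuationSubring F with hφ
    set n := p.natDegree with hn
    have hn1 : n ≠ 0 := by
      have := Nat.odd_iff.mp hodd
      omega
    have hp0 : p ≠ 0 := fun h => hn1 (by rw [hn, h, natDegree_zero])
    set l := p.leadingCoeff with hl
    have hl0 : l ≠ 0 := leadingCoeff_ne_zero.mpr hp0
    set p' := p * C l⁻¹ with hp'
    have hp'monic : p'.Monic := monic_mul_leadingCoeff_inv hp0
    have hp'deg : p'.natDegree = n := by
      rw [hp', Polynomial.natDegree_mul hp0 (by simp [hl0]), Polynomial.natDegree_C, add_zero]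
    -- lift p' to a monic polynomial over the valuation ring
    set b : ℕ → v.valuationSubring := fun i => Classical.choose (hsurj (p'.coeff i)) with hb
    have hbs : ∀ i, ρ (b i) = p'.coeff i := fun i => Classical.choose_spec (hsurj (p'.coeff i))
    set Q : Polynomial v.valuationSubring :=
      X ^ n + ∑ i ∈ Finset.range n, C (b i) * X ^ i with hQ
    have hQc : ∀ j, Q.coeff j = if j = n then 1 else if j < n then b j else 0 := by
      intro j
      rw [hQ, Polynomial.coeff_add, Polynomial.coeff_X_pow, Polynomial.finset_sum_coeff]
      have hterm : ∀ i ∈ Finset.range n, (C (b i) * X ^ i).coeff j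
          = if j = i then b i else 0 := by
        intro i _
        rw [Polynomial.coeff_C_mul, Polynomial.coeff_X_pow]
        split_ifs <;> simp
      rw [Finset.sum_congr rfl hterm, Finset.sum_ite_eq (Finset.range n) j b]
      by_cases h : j = n
      · subst h
        rw [if_pos rfl, if_pos rfl, if_neg (by simp)]
        simp
      · rw [if_neg h, if_neg h, zero_add]
        by_cases h2 : j < n
        · rw [if_pos (Finset.mem_range.mpr h2), if_pos h2]
        · rw [if_neg (fun hc => h2 (Finset.mem_range.mp hc)), if_neg h2]
    have hQdegle : Q.natDegree ≤ n := by
      rw [Polynomial.natDegree_le_iff_coeff_eq_zero]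
      intro m hm
      rw [hQc]
      rw [if_neg (by omega), if_neg (by omega)]
    have hQn : Q.coeff n = 1 := by rw [hQc, if_pos rfl]
    have hQdeg : Q.natDegree = n :=
      le_antisymm hQdegle (Polynomial.le_natDegree_of_ne_zero (by rw [hQn]; exact one_ne_zero))
    have hQmonic : Q.Monic := by
      rw [Polynomial.Monic, Polynomial.leadingCoeff, hQdeg, hQn]
    have hQmap : Q.map ρ = p' := by
      ext j
      rw [Polynomial.coeff_map, hQc]
      rcases eq_or_ne j n with h | h
      · rw [if_pos h, map_one, h, ← hp'deg]
        exact (hp'monic.coeff_natDegree).symm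
      · rw [if_neg h]
        rcases Nat.lt_or_ge j n with h2 | h2
        · rw [if_pos h2]
          exact hbs j
        · rw [if_neg (by omega), map_zero]
          exact (Polynomial.coeff_eq_zero_of_natDegree_lt (by omega : p'.natDegree < j)).symm
    -- a root over F
    have hQFdeg : (Q.map φ).natDegree = n := by rw [hQmonic.natDegree_map, hQdeg]
    obtain ⟨z, hz⟩ := hF.2 (Q.map φ) (by rw [hQFdeg]; exact hn ▸ hodd)
    have hzv : v z ≤ 1 := root_val_le_one v hQmonic hz
    set zO : v.valuationSubring := ⟨z, (Valuation.mem_valuationSubring_iff v z).mpr hzv⟩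
      with hzO
    have hQz : Q.eval zO = 0 := by
      have h2 : φ (Q.eval zO) = (Q.map φ).eval (φ zO) := by
        rw [Polynomial.eval_map, Polynomial.eval₂_at_apply]
      have h3 : φ (Q.eval zO) = 0 := by
        rw [h2, show φ zO = z from rfl, hz]
      have h4 : Function.Injective φ := Subtype.coe_injective
      exact h4 (by rw [h3, map_zero])
    refine ⟨ρ zO, ?_⟩
    have h4 : p'.eval (ρ zO) = 0 := by
      rw [← hQmap, Polynomial.eval_map, Polynomial.eval₂_at_apply, hQz, map_zero]
    have hpp' : p = p' * C l := by
      rw [hp', mul_assoc, ← Polynomial.C_mul, inv_mul_cancel₀ hl0, Polynomial.C_1, mul_one]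
    rw [hpp', Polynomial.eval_mul, h4, zero_mul]
  · -- divisibility of the value group
    intro x hx n hn
    obtain ⟨y, hy0, hyn⟩ := rc_nthRoot hF n hn |x| (abs_nonneg x)
    have hyne : y ≠ 0 := by
      intro h
      rw [h, zero_pow (by omega)] at hyn
      exact hx (abs_eq_zero.mp hyn.symm)
    exact ⟨y, hyne, by rw [← v.map_pow, hyn, val_abs]⟩
  · exact rc_hensel hF v hconv
end
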